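/- Let V be a 2-dimensional real vector space and J a generalized complex structure on V inducing the canonical orientation of V ⊕ V*. Let {Q_1, Q_2 = JQ_1, Q_3, Q_4 = JQ_3} be an orthonormal basis of V ⊕ V* (with ‖Q_1‖² = ‖Q_2‖² = 1, ‖Q_3‖² = ‖Q_4‖² = −1), and write e_i = π_1(Q_i) for the V-components. Then there exists t ∈ ℝ such that e_3 = cos(t)·e_1 + sin(t)·e_2 and e_4 = −sin(t)·e_1 + cos(t)·e_2. -/

import Mathlib

set_option maxHeartbeats 4000000

/-- The natural neutral metric on `V ⊕ V*`:
`⟨X+ξ, Y+η⟩ = ½(ξ(Y) + η(X))`. -/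
noncomputable def neutralForm {V : Type*} [AddCommGroup V] [Module ℝ V]
    (p q : V × Module.Dual ℝ V) : ℝ :=
  (p.2 q.1 + q.2 p.1) / 2

theorem corelemma (a0 a1 a2 a3 b0 b1 b2 b3 c0 c1 c2 c3 d0 d1 d2 d3 : ℝ)
    (h00 : c0*a0 + d0*b0 = 1) (h11 : c1*a1 + d1*b1 = 1)
    (h22 : c2*a2 + d2*b2 = -1) (h33 : c3*a3 + d3*b3 = -1)
    (h01 : c0*a1 + d0*b1 + (c1*a0 + d1*b0) = 0)
    (h02 : c0*a2 + d0*b2 + (c2*a0 + d2*b0) = 0)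
    (h03 : c0*a3 + d0*b3 + (c3*a0 + d3*b0) = 0)
    (h12 : c1*a2 + d1*b2 + (c2*a1 + d2*b1) = 0)
    (h13 : c1*a3 + d1*b3 + (c3*a1 + d3*b1) = 0)
    (h23 : c2*a3 + d2*b3 + (c3*a2 + d3*b2) = 0)
    (hD : 0 < ((a0*b1 - a1*b0)*(c2*d3 - c3*d2) - (a0*b2 - a2*b0)*(c1*d3 - c3*d1) + (a0*b3 - a3*b0)*(c1*d2 - c2*d1) + (a1*b2 - a2*b1)*(c0*d3 - c3*d0) - (a1*b3 - a3*b1)*(c0*d2 - c2*d0) + (a2*b3 - a3*b2)*(c0*d1 - c1*d0))) :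
    ∃ x y : ℝ, x^2 + y^2 = 1 ∧ a2 = x*a0 + y*a1 ∧ b2 = x*b0 + y*b1 ∧
      a3 = -y*a0 + x*a1 ∧ b3 = -y*b0 + x*b1 := by
  have hT11 : ((a0*b2 - a2*b0) - (a1*b3 - a3*b1)) * ((c0*d2 - c2*d0) + (c1*d3 - c3*d1)) = 0 := by
    linear_combination (1*b2*d2 + (-1/2)*a3*b2*b3*c2*d1*d1 + (1/2)*a3*b2*b3*c1*d1*d2 + (-1/2)*a3*b2*b2*c3*d1*d1 + (1/2)*a3*b2*b2*c1*d1*d3 + 1*a3*b1*c3*d1 - 1*a3*b1*c1*d3 + (1/2)*a3*b1*b3*c2*d1*d2 + (-1/2)*a3*b1*b3*c1*d2*d2 + (1/2)*a3*b1*b2*c3*d1*d2 + (-1/2)*a3*b1*b2*c2*d1*d3 + (-1/2)*a3*a3*b2*c1*c2*d1 + (1/2)*a3*a3*b2*c1*c1*d2 + (1/2)*a3*a3*b1*c2*c2*d1 + (-1/2)*a3*a3*b1*c1*c2*d2 + 1*a2*c2 + (1/2)*a2*b3*b3*c2*d1*d1 + (-1/2)*a2*b3*b3*c1*d1*d2 +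 (1/2)*a2*b2*b3*c3*d1*d1 + (-1/2)*a2*b2*b3*c1*d1*d3 - 1*a2*b1*c2*d1 + 1*a2*b1*c1*d2 + (1/2)*a2*b1*b3*c2*d1*d3 + (-1/2)*a2*b1*b3*c1*d2*d3 + (1/2)*a2*a3*b3*c1*c2*d1 + (-1/2)*a2*a3*b3*c1*c1*d2 + (-1/2)*a2*a3*b2*c1*c3*d1 + (1/2)*a2*a3*b2*c1*c1*d3 + (1/2)*a2*a3*b1*c2*c3*d1 + (-1/2)*a2*a3*b1*c1*c2*d3 + (1/2)*a2*a2*b3*c1*c3*d1 + (-1/2)*a2*a2*b3*c1*c1*d3 - 1*a1*b3*c3*d1 + 1*a1*b3*c1*d3 + (-1/2)*a1*b3*b3*c2*d1*d2 + (1/2)*a1*b3*b3*c1*d2*d2 + 1*a1*b2*c2*d1 - 1*a1*b2*c1*d2 + (-1/2)*a1*b2*b3*c3*d1*d2 + (1/2)*a1*b2*b3*c1*d2*d3 + (-1/2)*a1*a3*b3*c2*c2*d1 + (1/2)*a1*a3*b3*c1*c2*d2 + (-1/2)*a1*a3*b2*c2*c3*d1 + (1/2)*a1*a3*b2*c1*c3*d2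 + (-1/2)*a1*a2*b3*c1*c3*d2 + (1/2)*a1*a2*b3*c1*c2*d3) * h00 + ((1/2)*b3*b3*d2*d2 - 1*b2*d2 + (1/2)*b2*b3*d2*d3 - 1*b0*b3*d0*d3 + (-1/2)*b0*b3*b3*d0*d2*d2 + 1*b0*b2*d0*d2 + (-1/2)*b0*b2*b3*d0*d2*d3 + 1*a3*b3*c2*d2 + (1/2)*a3*b2*c2*d3 - 1*a3*b2*b3*c2*d0*d0 + 1*a3*b2*b3*c0*d0*d2 - 1*a3*b0*c0*d3 + (-1/2)*a3*b0*b3*c2*d0*d2 + (-1/2)*a3*b0*b3*c0*d2*d2 + (-1/2)*a3*b0*b2*c2*d0*d3 + (1/2)*a3*a3*c2*c2 - 1*a3*a3*b2*c0*c2*d0 + 1*a3*a3*b2*c0*c0*d2 + (-1/2)*a3*a3*b0*c0*c2*d2 - 1*a2*c2 + (1/2)*a2*b3*c3*d2 + 1*a2*b3*b3*c2*d0*d0 - 1*a2*b3*b3*c0*d0*d2 + 1*a2*b0*c0*d2 + (-1/2)*a2*b0*b3*c0*d2*d3 + (1/2)*a2*a3*c2*c3 + 1*a2*a3*b3*c0*c2*d0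 - 1*a2*a3*b3*c0*c0*d2 + (-1/2)*a2*a3*b0*c0*c2*d3 - 1*a0*b3*c3*d0 + (-1/2)*a0*b3*b3*c2*d0*d2 + 1*a0*b2*c2*d0 + (-1/2)*a0*b2*b3*c3*d0*d2 - 1*a0*a3*c0*c3 + (-1/2)*a0*a3*b3*c2*c2*d0 + (-1/2)*a0*a3*b3*c0*c2*d2 + (-1/2)*a0*a3*b2*c2*c3*d0 + (-1/2)*a0*a3*a3*c0*c2*c2 + 1*a0*a2*c0*c2 + (-1/2)*a0*a2*b3*c0*c3*d2 + (-1/2)*a0*a2*a3*c0*c2*c3) * h11 + ((1/2)*b3*b3*d1*d1 + 1*b3*b3*d0*d0 + (1/2)*b1*b3*d1*d3 - 1*b1*b3*b3*d0*d0*d1 + (-1/2)*b0*b3*b3*d0*d1*d1 + 1*b0*b1*d0*d1 + (-1/2)*b0*b1*b3*d0*d1*d3 + 1*a3*b3*c1*d1 + 2*a3*b3*c0*d0 + (1/2)*a3*b1*c1*d3 - 1*a3*b1*b3*c1*d0*d0 - 1*a3*b1*b3*c0*d0*d1 + (-1/2)*a3*b0*b3*c1*d0*d1 + (-1/2)*a3*b0*b3*c0*d1*d1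 + (-1/2)*a3*b0*b1*c1*d0*d3 + (1/2)*a3*a3*c1*c1 + 1*a3*a3*c0*c0 - 1*a3*a3*b1*c0*c1*d0 + (-1/2)*a3*a3*b0*c0*c1*d1 + (1/2)*a1*b3*c3*d1 - 1*a1*b3*b3*c0*d0*d1 + 1*a1*b0*c0*d1 + (-1/2)*a1*b0*b3*c0*d1*d3 + (1/2)*a1*a3*c1*c3 - 1*a1*a3*b3*c0*c1*d0 - 1*a1*a3*b3*c0*c0*d1 + (-1/2)*a1*a3*b0*c0*c1*d3 - 1*a1*a3*a3*c0*c0*c1 + (-1/2)*a0*b3*b3*c1*d0*d1 + 1*a0*b1*c1*d0 + (-1/2)*a0*b1*b3*c3*d0*d1 + (-1/2)*a0*a3*b3*c1*c1*d0 + (-1/2)*a0*a3*b3*c0*c1*d1 + (-1/2)*a0*a3*b1*c1*c3*d0 + (-1/2)*a0*a3*a3*c0*c1*c1 + 1*a0*a1*c0*c1 + (-1/2)*a0*a1*b3*c0*c3*d1 + (-1/2)*a0*a1*a3*c0*c1*c3) * h22 + ((-1/2)*b2*b2*d1*d1 + (1/2)*b1*b2*d1*d2 + (1/2)*b0*b2*b2*d0*d1*d1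 - 1*b0*b1*d0*d1 + (-1/2)*b0*b1*b2*d0*d1*d2 - 1*a2*b2*c1*d1 + (1/2)*a2*b1*c1*d2 + (1/2)*a2*b0*b2*c1*d0*d1 + (1/2)*a2*b0*b2*c0*d1*d1 + (-1/2)*a2*b0*b1*c1*d0*d2 + (-1/2)*a2*a2*c1*c1 + (1/2)*a2*a2*b0*c0*c1*d1 + (1/2)*a1*b2*c2*d1 - 1*a1*b0*c0*d1 + (-1/2)*a1*b0*b2*c0*d1*d2 + (1/2)*a1*a2*c1*c2 + (-1/2)*a1*a2*b0*c0*c1*d2 + (1/2)*a0*b2*b2*c1*d0*d1 - 1*a0*b1*c1*d0 + (-1/2)*a0*b1*b2*c2*d0*d1 + (1/2)*a0*a2*b2*c1*c1*d0 + (1/2)*a0*a2*b2*c0*c1*d1 + (-1/2)*a0*a2*b1*c1*c2*d0 + (1/2)*a0*a2*a2*c0*c1*c1 - 1*a0*a1*c0*c1 + (-1/2)*a0*a1*b2*c0*c2*d1 + (-1/2)*a0*a1*a2*c0*c1*c2) * h33 + ((1/2)*b3*b3*d0*d1 + 1*b2*d3 + (1/2)*b2*b3*b3*d0*d1*d2 +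 (-1/2)*b2*b2*d0*d1 + (-1/2)*b2*b2*b3*d0*d1*d3 + 1*b1*b3*d0*d3 - 1*b1*b2*d0*d2 + (1/2)*a3*b3*c1*d0 + (1/2)*a3*b3*c0*d1 + (1/2)*a3*b2*b3*c2*d0*d1 + (1/2)*a3*b2*b3*c1*d0*d2 + (-1/2)*a3*b2*b2*c0*d1*d3 + 1*a3*b1*c0*d3 + (-1/2)*a3*b1*b3*c2*d0*d2 + (1/2)*a3*b1*b3*c0*d2*d2 + (1/2)*a3*a3*c0*c1 + (1/2)*a3*a3*b2*c1*c2*d0 + (-1/2)*a3*a3*b1*c2*c2*d0 + (1/2)*a3*a3*b1*c0*c2*d2 + 1*a2*c3 + (1/2)*a2*b3*b3*c0*d1*d2 + (-1/2)*a2*b2*c1*d0 + (-1/2)*a2*b2*c0*d1 + (-1/2)*a2*b2*b3*c3*d0*d1 + (-1/2)*a2*b2*b3*c1*d0*d3 - 1*a2*b1*c0*d2 + (-1/2)*a2*b1*b3*c3*d0*d2 + (1/2)*a2*b1*b3*c0*d2*d3 + (1/2)*a2*a3*b3*c0*c2*d1 + (1/2)*a2*a3*b3*c0*c1*d2 + (-1/2)*a2*a3*b2*c0*c3*d1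 + (-1/2)*a2*a3*b2*c0*c1*d3 + (-1/2)*a2*a3*b1*c2*c3*d0 + (1/2)*a2*a3*b1*c0*c2*d3 + (1/2)*a2*a3*a3*c0*c1*c2 + (-1/2)*a2*a2*c0*c1 + (-1/2)*a2*a2*b3*c1*c3*d0 + (-1/2)*a2*a2*a3*c0*c1*c3 + 1*a1*b3*c3*d0 + (1/2)*a1*b3*b3*c2*d0*d2 + (-1/2)*a1*b3*b3*c0*d2*d2 - 1*a1*b2*c2*d0 + (1/2)*a1*b2*b3*c3*d0*d2 + (-1/2)*a1*b2*b3*c0*d2*d3 + 1*a1*a3*c0*c3 + (1/2)*a1*a3*b3*c2*c2*d0 + (-1/2)*a1*a3*b3*c0*c2*d2 + (1/2)*a1*a3*b2*c2*c3*d0 + (-1/2)*a1*a3*b2*c0*c2*d3 - 1*a1*a2*c0*c2) * h01 + ((-1/2)*b3*b3*d0*d2 + (1/2)*b1*b3*b3*d0*d1*d2 + (-1/2)*b1*b2*d0*d1 + (1/2)*b1*b2*b3*d0*d1*d3 + (-1/2)*a3*b3*c2*d0 + (-1/2)*a3*b3*c0*d2 + (-1/2)*a3*b2*b3*c1*d0*d1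 + (1/2)*a3*b2*b3*c0*d1*d1 + (1/2)*a3*b1*b3*c2*d0*d1 + (1/2)*a3*b1*b3*c1*d0*d2 + (1/2)*a3*b1*b2*c0*d1*d3 + (-1/2)*a3*a3*c0*c2 + (-1/2)*a3*a3*b2*c1*c1*d0 + (1/2)*a3*a3*b2*c0*c1*d1 + (1/2)*a3*a3*b1*c1*c2*d0 + (1/2)*a2*b3*b3*c1*d0*d1 + (-1/2)*a2*b3*b3*c0*d1*d1 + (-1/2)*a2*b1*c1*d0 + (1/2)*a2*b1*b3*c3*d0*d1 + (1/2)*a2*b1*b3*c1*d0*d3 + (-1/2)*a2*b1*b3*c0*d1*d3 + (1/2)*a2*a3*b3*c1*c1*d0 + (-1/2)*a2*a3*b3*c0*c1*d1 + (1/2)*a2*a3*b1*c1*c3*d0 + (1/2)*a1*b3*b3*c0*d1*d2 + (-1/2)*a1*b2*c0*d1 + (1/2)*a1*b2*b3*c0*d1*d3 + (1/2)*a1*a3*b3*c0*c2*d1 + (1/2)*a1*a3*b3*c0*c1*d2 + (-1/2)*a1*a3*b2*c1*c3*d0 + (1/2)*a1*a3*b2*c0*c3*d1 + (1/2)*a1*a3*b2*c0*c1*d3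 + (1/2)*a1*a3*a3*c0*c1*c2 + (-1/2)*a1*a2*c0*c1 + (1/2)*a1*a2*b3*c1*c3*d0 + (1/2)*a1*a2*a3*c0*c1*c3) * h02 + (-1*b3*d0 - 1*b2*d1 + (-1/2)*b2*b3*d0*d2 + (3/2)*b1*b3*d0*d1 + 1*b1*b2*b3*d0*d1*d2 - 1*a3*c0 + (-1/2)*a3*b2*c2*d0 + (-1/2)*a3*b2*b2*c1*d0*d1 + (1/2)*a3*b2*b2*c0*d1*d1 + (3/2)*a3*b1*c1*d0 + 1*a3*b1*b2*c2*d0*d1 + (1/2)*a3*b1*b2*c1*d0*d2 + (-1/2)*a3*b1*b2*c0*d1*d2 - 1*a2*c1 + (-1/2)*a2*b3*c0*d2 + (1/2)*a2*b2*b3*c1*d0*d1 + (-1/2)*a2*b2*b3*c0*d1*d1 + (1/2)*a2*b1*b3*c1*d0*d2 + (1/2)*a2*b1*b3*c0*d1*d2 + (-1/2)*a2*a3*c0*c2 + (-1/2)*a2*a3*b2*c1*c1*d0 + (1/2)*a2*a3*b2*c0*c1*d1 + 1*a2*a3*b1*c1*c2*d0 + (1/2)*a2*a2*b3*c1*c1*d0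 + (-1/2)*a2*a2*b3*c0*c1*d1 + (3/2)*a1*b3*c0*d1 + 1*a1*b2*b3*c0*d1*d2 + (3/2)*a1*a3*c0*c1 + (1/2)*a1*a3*b2*c1*c2*d0 + (1/2)*a1*a3*b2*c0*c2*d1 + (-1/2)*a1*a2*b3*c1*c2*d0 + (1/2)*a1*a2*b3*c0*c2*d1 + 1*a1*a2*b3*c0*c1*d2 + 1*a1*a2*a3*c0*c1*c2) * h03 + (1*b3*d0 + (-1/2)*b3*b3*d1*d2 + (1/2)*b2*d1 + (-1/2)*b2*b3*d1*d3 + (-1/2)*b1*b3*b3*d0*d0*d2 + 1*b1*b2*d0*d0 + 1*a3*c0 + (-1/2)*a3*b3*c2*d1 + (-1/2)*a3*b3*c1*d2 + (-1/2)*a3*b2*c1*d3 + (1/2)*a3*b2*b3*c1*d0*d0 + (-1/2)*a3*b2*b3*c0*d0*d1 + (-1/2)*a3*b1*b3*c2*d0*d0 + (-1/2)*a3*b1*b3*c0*d0*d2 + (-1/2)*a3*a3*c1*c2 + (1/2)*a3*a3*b2*c0*c1*d0 + (-1/2)*a3*a3*b2*c0*c0*d1 + (-1/2)*a3*a3*b1*c0*c2*d0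 + (1/2)*a2*c1 + (-1/2)*a2*b3*c3*d1 + (-1/2)*a2*b3*b3*c1*d0*d0 + (1/2)*a2*b3*b3*c0*d0*d1 + 1*a2*b1*c0*d0 + (-1/2)*a2*a3*c1*c3 + (-1/2)*a2*a3*b3*c0*c1*d0 + (1/2)*a2*a3*b3*c0*c0*d1 + (-1/2)*a1*b3*b3*c0*d0*d2 + 1*a1*b2*c0*d0 + (-1/2)*a1*a3*b3*c0*c2*d0 + (-1/2)*a1*a3*b3*c0*c0*d2 + (-1/2)*a1*a3*a3*c0*c0*c2 + 1*a1*a2*c0*c0) * h12 + ((-1/2)*b3*d1 - 1*b2*b3*d1*d2 - 1*b1*b3*d0*d0 + (-1/2)*b1*b2*b3*d0*d0*d2 + (-1/2)*a3*c1 - 1*a3*b2*c2*d1 + (1/2)*a3*b2*b2*c1*d0*d0 + (-1/2)*a3*b2*b2*c0*d0*d1 - 1*a3*b1*c0*d0 + (-1/2)*a3*b1*b2*c2*d0*d0 - 1*a2*b3*c1*d2 + (-1/2)*a2*b2*b3*c1*d0*d0 + (1/2)*a2*b2*b3*c0*d0*d1 + (-1/2)*a2*b1*b3*c0*d0*d2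 - 1*a2*a3*c1*c2 + (1/2)*a2*a3*b2*c0*c1*d0 + (-1/2)*a2*a3*b2*c0*c0*d1 + (-1/2)*a2*a3*b1*c0*c2*d0 + (-1/2)*a2*a2*b3*c0*c1*d0 + (1/2)*a2*a2*b3*c0*c0*d1 - 1*a1*b3*c0*d0 + (-1/2)*a1*b2*b3*c0*d0*d2 - 1*a1*a3*c0*c0 + (-1/2)*a1*a3*b2*c0*c2*d0 + (-1/2)*a1*a2*b3*c0*c0*d2 + (-1/2)*a1*a2*a3*c0*c0*c2) * h13 + ((1/2)*b3*d2 + 1*b2*b3*d1*d1 - 1*b1*d0 + (1/2)*b1*b1*b3*d0*d0*d2 + (1/2)*a3*c2 + 1*a3*b2*c1*d1 + (-1/2)*a3*b1*b2*c1*d0*d0 + (1/2)*a3*b1*b2*c0*d0*d1 + (1/2)*a3*b1*b1*c2*d0*d0 + 1*a2*b3*c1*d1 + (1/2)*a2*b1*b3*c1*d0*d0 + (-1/2)*a2*b1*b3*c0*d0*d1 + 1*a2*a3*c1*c1 - 1*a1*c0 + 1*a1*b1*b3*c0*d0*d2 + (-1/2)*a1*a3*b2*c0*c1*d0 + (1/2)*a1*a3*b2*c0*c0*d1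 + 1*a1*a3*b1*c0*c2*d0 + (1/2)*a1*a2*b3*c0*c1*d0 + (-1/2)*a1*a2*b3*c0*c0*d1 + (1/2)*a1*a1*b3*c0*c0*d2 + (1/2)*a1*a1*a3*c0*c0*c2) * h23
  have hT12 : ((a0*b2 - a2*b0) - (a1*b3 - a3*b1)) * ((c0*d3 - c3*d0) - (c1*d2 - c2*d1)) = 0 := by
    linear_combination (1*b2*d3 + (1/2)*a3*b2*b3*c2*d0*d1 + (-1/2)*a3*b2*b3*c1*d0*d2 + (-1/2)*a3*b2*b2*c3*d0*d1 + (1/2)*a3*b2*b2*c1*d0*d3 + (-1/2)*a3*b1*c2*d1 + (1/2)*a3*b1*c1*d2 + (1/2)*a3*b1*b2*c3*d0*d2 + (-1/2)*a3*b1*b2*c2*d0*d3 + (1/2)*a3*a3*b2*c0*c2*d1 + (-1/2)*a3*a3*b2*c0*c1*d2 + 1*a2*c3 + (-1/2)*a2*b3*b3*c2*d0*d1 + (1/2)*a2*b3*b3*c1*d0*d2 + (1/2)*a2*b2*b3*c3*d0*d1 + (-1/2)*a2*b2*b3*c1*d0*d3 + (-1/2)*a2*b1*c3*d1 + (1/2)*a2*b1*c1*d3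 + (-1/2)*a2*b1*b3*c3*d0*d2 + (1/2)*a2*b1*b3*c2*d0*d3 + (-1/2)*a2*a3*b3*c0*c2*d1 + (1/2)*a2*a3*b3*c0*c1*d2 + (-1/2)*a2*a3*b2*c0*c3*d1 + (1/2)*a2*a3*b2*c0*c1*d3 + (1/2)*a2*a2*b3*c0*c3*d1 + (-1/2)*a2*a2*b3*c0*c1*d3 + (1/2)*a1*b3*c2*d1 + (-1/2)*a1*b3*c1*d2 + (1/2)*a1*b2*c3*d1 + (-1/2)*a1*b2*c1*d3 + (1/2)*a1*a3*b2*c0*c3*d2 + (-1/2)*a1*a3*b2*c0*c2*d3 + (-1/2)*a1*a2*b3*c0*c3*d2 + (1/2)*a1*a2*b3*c0*c2*d3) * h00 + ((1/2)*b3*d2 + (-1/2)*b2*d3 + (1/2)*b0*b3*d0*d2 + (1/2)*b0*b2*d0*d3 + (1/2)*a3*c2 + (1/2)*a3*b0*c0*d2 + (-1/2)*a2*c3 + (1/2)*a2*b0*c0*d3 + (1/2)*a0*b3*c2*d0 + (1/2)*a0*b2*c3*d0 + (1/2)*a0*a3*c0*c2 + (1/2)*a0*a2*c0*c3) * h11 +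 ((-1/2)*b3*b3*d0*d1 + (1/2)*b1*b3*d0*d3 - 1*b0*d1 + (1/2)*b0*b3*b3*d0*d0*d1 + (-1/2)*b0*b1*b3*d0*d0*d3 + (-1/2)*a3*b3*c1*d0 + (-1/2)*a3*b3*c0*d1 + (1/2)*a3*b1*c0*d3 + 1*a3*b0*b3*c0*d0*d1 + (-1/2)*a3*b0*b1*c0*d0*d3 + (-1/2)*a3*a3*c0*c1 + (1/2)*a3*a3*b0*c0*c0*d1 + (1/2)*a1*b3*c3*d0 + (-1/2)*a1*b0*b3*c0*d0*d3 + (1/2)*a1*a3*c0*c3 + (-1/2)*a1*a3*b0*c0*c0*d3 - 1*a0*c1 + (1/2)*a0*b3*b3*c1*d0*d0 + (-1/2)*a0*b1*b3*c3*d0*d0 + 1*a0*a3*b3*c0*c1*d0 + (-1/2)*a0*a3*b1*c0*c3*d0 + (1/2)*a0*a3*a3*c0*c0*c1 + (-1/2)*a0*a1*b3*c0*c3*d0 + (-1/2)*a0*a1*a3*c0*c0*c3) * h22 + ((-1/2)*b2*b2*d0*d1 - 1*b1*d0 + (1/2)*b1*b2*d0*d2 + (1/2)*b0*b2*b2*d0*d0*d1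 + (-1/2)*b0*b1*b2*d0*d0*d2 + (-1/2)*a2*b2*c1*d0 + (-1/2)*a2*b2*c0*d1 + (1/2)*a2*b1*c0*d2 + 1*a2*b0*b2*c0*d0*d1 + (-1/2)*a2*b0*b1*c0*d0*d2 + (-1/2)*a2*a2*c0*c1 + (1/2)*a2*a2*b0*c0*c0*d1 - 1*a1*c0 + (1/2)*a1*b2*c2*d0 + (-1/2)*a1*b0*b2*c0*d0*d2 + (1/2)*a1*a2*c0*c2 + (-1/2)*a1*a2*b0*c0*c0*d2 + (1/2)*a0*b2*b2*c1*d0*d0 + (-1/2)*a0*b1*b2*c2*d0*d0 + 1*a0*a2*b2*c0*c1*d0 + (-1/2)*a0*a2*b1*c0*c2*d0 + (1/2)*a0*a2*a2*c0*c0*c1 + (-1/2)*a0*a1*b2*c0*c2*d0 + (-1/2)*a0*a1*a2*c0*c0*c2) * h33 + (1 + (-1/2)*b3*b3*d0*d0 + (-1/2)*b2*b3*b3*d0*d0*d2 + (-1/2)*b2*b2*d0*d0 + (-1/2)*b2*b2*b3*d0*d0*d3 - 1*a3*b3*c0*d0 + (-1/2)*a3*b2*b3*c2*d0*d0 + (-1/2)*a3*b2*b3*c0*d0*d2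 + (-1/2)*a3*b2*b2*c0*d0*d3 + (1/2)*a3*b1*c2*d0 + (-1/2)*a3*b1*c0*d2 + (-1/2)*a3*a3*c0*c0 + (-1/2)*a3*a3*b2*c0*c2*d0 + (-1/2)*a2*b3*b3*c0*d0*d2 - 1*a2*b2*c0*d0 + (-1/2)*a2*b2*b3*c3*d0*d0 + (-1/2)*a2*b2*b3*c0*d0*d3 + (1/2)*a2*b1*c3*d0 + (-1/2)*a2*b1*c0*d3 + (-1/2)*a2*a3*b3*c0*c2*d0 + (-1/2)*a2*a3*b3*c0*c0*d2 + (-1/2)*a2*a3*b2*c0*c3*d0 + (-1/2)*a2*a3*b2*c0*c0*d3 + (-1/2)*a2*a3*a3*c0*c0*c2 + (-1/2)*a2*a2*c0*c0 + (-1/2)*a2*a2*b3*c0*c3*d0 + (-1/2)*a2*a2*a3*c0*c0*c3 + (-1/2)*a1*b3*c2*d0 + (1/2)*a1*b3*c0*d2 + (-1/2)*a1*b2*c3*d0 + (1/2)*a1*b2*c0*d3) * h01 + ((1/2)*b3*d0 + 1*b2*d1 + (-1/2)*b1*b3*d0*d1 + (1/2)*b1*b2*d0*d0 + (1/2)*b1*b2*b3*d0*d0*d3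 + (1/2)*a3*c0 + (1/2)*a3*b2*b3*c1*d0*d0 + (-1/2)*a3*b2*b3*c0*d0*d1 + (-1/2)*a3*b1*c1*d0 + (1/2)*a3*b1*b2*c0*d0*d3 + (1/2)*a3*a3*b2*c0*c1*d0 + (-1/2)*a3*a3*b2*c0*c0*d1 + 1*a2*c1 + (-1/2)*a2*b3*b3*c1*d0*d0 + (1/2)*a2*b3*b3*c0*d0*d1 + (1/2)*a2*b1*c0*d0 + (1/2)*a2*b1*b3*c3*d0*d0 + (-1/2)*a2*a3*b3*c0*c1*d0 + (1/2)*a2*a3*b3*c0*c0*d1 + (1/2)*a2*a3*b1*c0*c3*d0 + (-1/2)*a1*b3*c0*d1 + (1/2)*a1*b2*c0*d0 + (1/2)*a1*b2*b3*c0*d0*d3 + (-1/2)*a1*a3*c0*c1 + (1/2)*a1*a3*b2*c0*c0*d3 + (1/2)*a1*a2*c0*c0 + (1/2)*a1*a2*b3*c0*c3*d0 + (1/2)*a1*a2*a3*c0*c0*c3) * h02 + ((-1/2)*b2*d0 + (1/2)*b1*b3*d0*d0 + (-1/2)*b1*b2*d0*d1 + (1/2)*b1*b2*b3*d0*d0*d2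 + (-1/2)*a3*b2*b2*c1*d0*d0 + (1/2)*a3*b2*b2*c0*d0*d1 + (1/2)*a3*b1*c0*d0 + (1/2)*a3*b1*b2*c2*d0*d0 + (-1/2)*a2*c0 + (1/2)*a2*b2*b3*c1*d0*d0 + (-1/2)*a2*b2*b3*c0*d0*d1 + (-1/2)*a2*b1*c1*d0 + (1/2)*a2*b1*b3*c0*d0*d2 + (-1/2)*a2*a3*b2*c0*c1*d0 + (1/2)*a2*a3*b2*c0*c0*d1 + (1/2)*a2*a3*b1*c0*c2*d0 + (1/2)*a2*a2*b3*c0*c1*d0 + (-1/2)*a2*a2*b3*c0*c0*d1 + (1/2)*a1*b3*c0*d0 + (-1/2)*a1*b2*c0*d1 + (1/2)*a1*b2*b3*c0*d0*d2 + (1/2)*a1*a3*c0*c0 + (1/2)*a1*a3*b2*c0*c2*d0 + (-1/2)*a1*a2*c0*c1 + (1/2)*a1*a2*b3*c0*c0*d2 + (1/2)*a1*a2*a3*c0*c0*c2) * h03 + ((-1/2)*b3*d1 + (-1/2)*b2*d0 + (-1/2)*b2*b3*d0*d3 + (1/2)*b1*b3*d0*d0 + (-1/2)*a3*c1 + (-1/2)*a3*b2*c0*d3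 + (1/2)*a3*b1*c0*d0 + (-1/2)*a2*c0 + (-1/2)*a2*b3*c3*d0 + (-1/2)*a2*a3*c0*c3 + (1/2)*a1*b3*c0*d0 + (1/2)*a1*a3*c0*c0) * h12 + ((1/2)*b3*d0 + (1/2)*b2*d1 + (-1/2)*b2*b3*d0*d2 + (1/2)*b1*b2*d0*d0 + (1/2)*a3*c0 + (-1/2)*a3*b2*c2*d0 + (1/2)*a2*c1 + (-1/2)*a2*b3*c0*d2 + (1/2)*a2*b1*c0*d0 + (-1/2)*a2*a3*c0*c2 + (1/2)*a1*b2*c0*d0 + (1/2)*a1*a2*c0*c0) * h13 + ((1/2) + 1*b2*b3*d0*d1 + (-1/2)*b1*b1*d0*d0 + (1/2)*a3*b2*c1*d0 + (1/2)*a3*b2*c0*d1 + (1/2)*a2*b3*c1*d0 + (1/2)*a2*b3*c0*d1 + 1*a2*a3*c0*c1 - 1*a1*b1*c0*d0 + (-1/2)*a1*a1*c0*c0) * h23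
  have hT13 : ((a0*b2 - a2*b0) - (a1*b3 - a3*b1)) * ((c0*d1 - c1*d0) + (c2*d3 - c3*d2)) = 0 := by
    linear_combination (1*b2*d1 + (1/2)*a3*b2*c3*d1 + (-1/2)*a3*b2*c1*d3 + (1/2)*a3*b1*c3*d2 + (-1/2)*a3*b1*c2*d3 + 1*a2*c1 + (-1/2)*a2*b3*c3*d1 + (1/2)*a2*b3*c1*d3 + (-1/2)*a2*b1*b3*c2*d0*d1 + (1/2)*a2*b1*b3*c1*d0*d2 + (1/2)*a2*b1*b2*c3*d0*d1 + (-1/2)*a2*b1*b2*c1*d0*d3 + (-1/2)*a2*b1*b1*c3*d0*d2 + (1/2)*a2*b1*b1*c2*d0*d3 + (-1/2)*a2*a3*b1*c0*c2*d1 + (1/2)*a2*a3*b1*c0*c1*d2 + (1/2)*a2*a2*b1*c0*c3*d1 + (-1/2)*a2*a2*b1*c0*c1*d3 + (-1/2)*a1*b3*c3*d2 + (1/2)*a1*b3*c2*d3 + (1/2)*a1*b2*b3*c2*d0*d1 + (-1/2)*a1*b2*b3*c1*d0*d2 + (-1/2)*a1*b2*b2*c3*d0*d1 + (1/2)*a1*b2*b2*c1*d0*d3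 + (1/2)*a1*b1*b2*c3*d0*d2 + (-1/2)*a1*b1*b2*c2*d0*d3 + (1/2)*a1*a3*b2*c0*c2*d1 + (-1/2)*a1*a3*b2*c0*c1*d2 + (-1/2)*a1*a2*b2*c0*c3*d1 + (1/2)*a1*a2*b2*c0*c1*d3 + (-1/2)*a1*a2*b1*c0*c3*d2 + (1/2)*a1*a2*b1*c0*c2*d3 + (1/2)*a1*a1*b2*c0*c3*d2 + (-1/2)*a1*a1*b2*c0*c2*d3) * h00 + (1*b3*d0 + (-1/2)*b2*b3*d0*d2 + (1/2)*b2*b2*d0*d3 + (1/2)*b0*b2*b3*d0*d0*d2 + (-1/2)*b0*b2*b2*d0*d0*d3 + 1*a3*c0 + (-1/2)*a3*b2*c2*d0 + (1/2)*a3*b0*b2*c0*d0*d2 + (-1/2)*a2*b3*c0*d2 + (1/2)*a2*b2*c3*d0 + (1/2)*a2*b2*c0*d3 + (1/2)*a2*b0*b3*c0*d0*d2 - 1*a2*b0*b2*c0*d0*d3 + (-1/2)*a2*a3*c0*c2 + (1/2)*a2*a3*b0*c0*c0*d2 + (1/2)*a2*a2*c0*c3 + (-1/2)*a2*a2*b0*c0*c0*d3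 + (1/2)*a0*b2*b3*c2*d0*d0 + (-1/2)*a0*b2*b2*c3*d0*d0 + (1/2)*a0*a3*b2*c0*c2*d0 + (1/2)*a0*a2*b3*c0*c2*d0 - 1*a0*a2*b2*c0*c3*d0 + (1/2)*a0*a2*a3*c0*c0*c2 + (-1/2)*a0*a2*a2*c0*c0*c3) * h11 + ((-1/2)*b1*b3*d0*d1 + (1/2)*b1*b1*d0*d3 - 1*b0*d3 + (1/2)*b0*b1*b3*d0*d0*d1 + (-1/2)*b0*b1*b1*d0*d0*d3 + (-1/2)*a3*b1*c1*d0 + (1/2)*a3*b0*b1*c0*d0*d1 + (-1/2)*a1*b3*c0*d1 + (1/2)*a1*b1*c3*d0 + (1/2)*a1*b1*c0*d3 + (1/2)*a1*b0*b3*c0*d0*d1 - 1*a1*b0*b1*c0*d0*d3 + (-1/2)*a1*a3*c0*c1 + (1/2)*a1*a3*b0*c0*c0*d1 + (1/2)*a1*a1*c0*c3 + (-1/2)*a1*a1*b0*c0*c0*d3 - 1*a0*c3 + (1/2)*a0*b1*b3*c1*d0*d0 + (-1/2)*a0*b1*b1*c3*d0*d0 + (1/2)*a0*a3*b1*c0*c1*d0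 + (1/2)*a0*a1*b3*c0*c1*d0 - 1*a0*a1*b1*c0*c3*d0 + (1/2)*a0*a1*a3*c0*c0*c1 + (-1/2)*a0*a1*a1*c0*c0*c3) * h22 + ((1/2)*b2*d1 + (-1/2)*b1*d2 + (-1/2)*b0*b2*d0*d1 + (-1/2)*b0*b1*d0*d2 + (1/2)*a2*c1 + (-1/2)*a2*b0*c0*d1 + (-1/2)*a1*c2 + (-1/2)*a1*b0*c0*d2 + (-1/2)*a0*b2*c1*d0 + (-1/2)*a0*b1*c2*d0 + (-1/2)*a0*a2*c0*c1 + (-1/2)*a0*a1*c0*c2) * h33 + ((-1/2)*b2*d0 + (1/2)*b2*b3*d0*d3 + (-1/2)*b1*b3*d0*d0 + (-1/2)*b1*b2*b3*d0*d0*d2 + (1/2)*a3*b2*c0*d3 + (-1/2)*a3*b1*c0*d0 + (-1/2)*a3*b1*b2*c0*d0*d2 + (-1/2)*a2*c0 + (1/2)*a2*b3*c3*d0 + (-1/2)*a2*b1*b3*c0*d0*d2 + (-1/2)*a2*b1*b2*c3*d0*d0 + (1/2)*a2*b1*b2*c0*d0*d3 + (1/2)*a2*a3*c0*c3 + (-1/2)*a2*a3*b1*c0*c0*d2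 + (-1/2)*a2*a2*b1*c0*c3*d0 + (1/2)*a2*a2*b1*c0*c0*d3 + (-1/2)*a1*b3*c0*d0 + (-1/2)*a1*b2*b3*c2*d0*d0 + (1/2)*a1*b2*b2*c3*d0*d0 + (-1/2)*a1*b2*b2*c0*d0*d3 + (-1/2)*a1*a3*c0*c0 + (-1/2)*a1*a3*b2*c0*c2*d0 + (-1/2)*a1*a2*b3*c0*c2*d0 + (1/2)*a1*a2*b2*c0*c3*d0 + (-1/2)*a1*a2*b2*c0*c0*d3 + (-1/2)*a1*a2*a3*c0*c0*c2) * h01 + (1*b2*d3 + (1/2)*b2*b3*d0*d0 + (1/2)*b1*d0 + (1/2)*b1*b3*d0*d3 + (-1/2)*b1*b2*b3*d0*d0*d1 + (1/2)*a3*b2*c0*d0 + (1/2)*a3*b1*c0*d3 + (-1/2)*a3*b1*b2*c0*d0*d1 + 1*a2*c3 + (1/2)*a2*b3*c0*d0 + (-1/2)*a2*b1*b3*c1*d0*d0 + (1/2)*a2*b1*b1*c3*d0*d0 + (-1/2)*a2*b1*b1*c0*d0*d3 + (1/2)*a2*a3*c0*c0 + (-1/2)*a2*a3*b1*c0*c1*d0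 + (1/2)*a1*c0 + (1/2)*a1*b3*c3*d0 + (-1/2)*a1*b2*b3*c0*d0*d1 + (-1/2)*a1*b1*b2*c3*d0*d0 + (1/2)*a1*b1*b2*c0*d0*d3 + (1/2)*a1*a3*c0*c3 + (-1/2)*a1*a3*b2*c0*c0*d1 + (-1/2)*a1*a2*b3*c0*c1*d0 + (1/2)*a1*a2*b1*c0*c3*d0 + (-1/2)*a1*a2*b1*c0*c0*d3 + (-1/2)*a1*a2*a3*c0*c0*c1 + (-1/2)*a1*a1*b2*c0*c3*d0 + (1/2)*a1*a1*b2*c0*c0*d3) * h02 + (1 + (-1/2)*b2*b2*d0*d0 + (1/2)*b1*b2*b2*d0*d0*d1 + (1/2)*b1*b1*d0*d0 + (1/2)*b1*b1*b2*d0*d0*d2 + (1/2)*a3*b2*c1*d0 + (-1/2)*a3*b2*c0*d1 + (1/2)*a3*b1*c2*d0 + (-1/2)*a3*b1*c0*d2 + (-1/2)*a2*b3*c1*d0 + (1/2)*a2*b3*c0*d1 - 1*a2*b2*c0*d0 + (1/2)*a2*b1*b2*c1*d0*d0 + (1/2)*a2*b1*b2*c0*d0*d1 + (1/2)*a2*b1*b1*c0*d0*d2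 + (-1/2)*a2*a2*c0*c0 + (1/2)*a2*a2*b1*c0*c1*d0 + (-1/2)*a1*b3*c2*d0 + (1/2)*a1*b3*c0*d2 + (1/2)*a1*b2*b2*c0*d0*d1 + 1*a1*b1*c0*d0 + (1/2)*a1*b1*b2*c2*d0*d0 + (1/2)*a1*b1*b2*c0*d0*d2 + (1/2)*a1*a2*b2*c0*c1*d0 + (1/2)*a1*a2*b2*c0*c0*d1 + (1/2)*a1*a2*b1*c0*c2*d0 + (1/2)*a1*a2*b1*c0*c0*d2 + (1/2)*a1*a2*a2*c0*c0*c1 + (1/2)*a1*a1*c0*c0 + (1/2)*a1*a1*b2*c0*c2*d0 + (1/2)*a1*a1*a2*c0*c0*c2) * h03 + ((1/2) + (1/2)*b3*b3*d0*d0 + (1/2)*b2*b3*d0*d1 + (-1/2)*b1*b2*d0*d3 + 1*a3*b3*c0*d0 + (1/2)*a3*b2*c1*d0 + (1/2)*a3*a3*c0*c0 + (1/2)*a2*b3*c0*d1 + (-1/2)*a2*b1*c3*d0 + (1/2)*a2*a3*c0*c1 + (-1/2)*a1*b2*c0*d3 + (-1/2)*a1*a2*c0*c3) * h12 + ((1/2)*b3*d2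 + (-1/2)*b2*b3*d0*d0 + (-1/2)*b2*b2*d0*d1 + (-1/2)*b1*d0 + (1/2)*a3*c2 + (-1/2)*a3*b2*c0*d0 + (-1/2)*a2*b3*c0*d0 + (-1/2)*a2*b2*c1*d0 + (-1/2)*a2*b2*c0*d1 + (-1/2)*a2*a3*c0*c0 + (-1/2)*a2*a2*c0*c1 + (-1/2)*a1*c0) * h13 + ((-1/2)*b3*d1 + (-1/2)*b2*d0 + (-1/2)*b1*b3*d0*d0 + (1/2)*b1*b2*d0*d1 + (-1/2)*a3*c1 + (-1/2)*a3*b1*c0*d0 + (-1/2)*a2*c0 + (1/2)*a2*b1*c1*d0 + (-1/2)*a1*b3*c0*d0 + (1/2)*a1*b2*c0*d1 + (-1/2)*a1*a3*c0*c0 + (1/2)*a1*a2*c0*c1) * h23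
  have hT21 : ((a0*b3 - a3*b0) + (a1*b2 - a2*b1)) * ((c0*d2 - c2*d0) + (c1*d3 - c3*d1)) = 0 := by
    linear_combination (1*b3*d2 + 1*a3*c2 + (-1/2)*a3*b2*b3*c2*d0*d1 + (1/2)*a3*b2*b3*c1*d0*d2 + (1/2)*a3*b2*b2*c3*d0*d1 + (-1/2)*a3*b2*b2*c1*d0*d3 + (-1/2)*a3*b1*c2*d1 + (1/2)*a3*b1*c1*d2 + (-1/2)*a3*b1*b2*c3*d0*d2 + (1/2)*a3*b1*b2*c2*d0*d3 + (-1/2)*a3*a3*b2*c0*c2*d1 + (1/2)*a3*a3*b2*c0*c1*d2 + (1/2)*a2*b3*b3*c2*d0*d1 + (-1/2)*a2*b3*b3*c1*d0*d2 + (-1/2)*a2*b2*b3*c3*d0*d1 + (1/2)*a2*b2*b3*c1*d0*d3 + (-1/2)*a2*b1*c3*d1 + (1/2)*a2*b1*c1*d3 + (1/2)*a2*b1*b3*c3*d0*d2 + (-1/2)*a2*b1*b3*c2*d0*d3 + (1/2)*a2*a3*b3*c0*c2*d1 + (-1/2)*a2*a3*b3*c0*c1*d2 + (1/2)*a2*a3*b2*c0*c3*d1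 + (-1/2)*a2*a3*b2*c0*c1*d3 + (-1/2)*a2*a2*b3*c0*c3*d1 + (1/2)*a2*a2*b3*c0*c1*d3 + (1/2)*a1*b3*c2*d1 + (-1/2)*a1*b3*c1*d2 + (1/2)*a1*b2*c3*d1 + (-1/2)*a1*b2*c1*d3 + (-1/2)*a1*a3*b2*c0*c3*d2 + (1/2)*a1*a3*b2*c0*c2*d3 + (1/2)*a1*a2*b3*c0*c3*d2 + (-1/2)*a1*a2*b3*c0*c2*d3) * h00 + ((-1/2)*b3*d2 + (1/2)*b2*d3 + (1/2)*b0*b3*d0*d2 + (1/2)*b0*b2*d0*d3 + (-1/2)*a3*c2 + (1/2)*a3*b0*c0*d2 + (1/2)*a2*c3 + (1/2)*a2*b0*c0*d3 + (1/2)*a0*b3*c2*d0 + (1/2)*a0*b2*c3*d0 + (1/2)*a0*a3*c0*c2 + (1/2)*a0*a2*c0*c3) * h11 + ((1/2)*b3*b3*d0*d1 + 1*b1*d0 + (-1/2)*b1*b3*d0*d3 + (-1/2)*b0*b3*b3*d0*d0*d1 + (1/2)*b0*b1*b3*d0*d0*d3 + (1/2)*a3*b3*c1*d0 + (1/2)*a3*b3*c0*d1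 + (-1/2)*a3*b1*c0*d3 - 1*a3*b0*b3*c0*d0*d1 + (1/2)*a3*b0*b1*c0*d0*d3 + (1/2)*a3*a3*c0*c1 + (-1/2)*a3*a3*b0*c0*c0*d1 + 1*a1*c0 + (-1/2)*a1*b3*c3*d0 + (1/2)*a1*b0*b3*c0*d0*d3 + (-1/2)*a1*a3*c0*c3 + (1/2)*a1*a3*b0*c0*c0*d3 + (-1/2)*a0*b3*b3*c1*d0*d0 + (1/2)*a0*b1*b3*c3*d0*d0 - 1*a0*a3*b3*c0*c1*d0 + (1/2)*a0*a3*b1*c0*c3*d0 + (-1/2)*a0*a3*a3*c0*c0*c1 + (1/2)*a0*a1*b3*c0*c3*d0 + (1/2)*a0*a1*a3*c0*c0*c3) * h22 + ((1/2)*b2*b2*d0*d1 + (-1/2)*b1*b2*d0*d2 + 1*b0*d1 + (-1/2)*b0*b2*b2*d0*d0*d1 + (1/2)*b0*b1*b2*d0*d0*d2 + (1/2)*a2*b2*c1*d0 + (1/2)*a2*b2*c0*d1 + (-1/2)*a2*b1*c0*d2 - 1*a2*b0*b2*c0*d0*d1 + (1/2)*a2*b0*b1*c0*d0*d2 + (1/2)*a2*a2*c0*c1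 + (-1/2)*a2*a2*b0*c0*c0*d1 + (-1/2)*a1*b2*c2*d0 + (1/2)*a1*b0*b2*c0*d0*d2 + (-1/2)*a1*a2*c0*c2 + (1/2)*a1*a2*b0*c0*c0*d2 + 1*a0*c1 + (-1/2)*a0*b2*b2*c1*d0*d0 + (1/2)*a0*b1*b2*c2*d0*d0 - 1*a0*a2*b2*c0*c1*d0 + (1/2)*a0*a2*b1*c0*c2*d0 + (-1/2)*a0*a2*a2*c0*c0*c1 + (1/2)*a0*a1*b2*c0*c2*d0 + (1/2)*a0*a1*a2*c0*c0*c2) * h33 + (-1 + (1/2)*b3*b3*d0*d0 + (1/2)*b2*b3*b3*d0*d0*d2 + (1/2)*b2*b2*d0*d0 + (1/2)*b2*b2*b3*d0*d0*d3 + 1*a3*b3*c0*d0 + (1/2)*a3*b2*b3*c2*d0*d0 + (1/2)*a3*b2*b3*c0*d0*d2 + (1/2)*a3*b2*b2*c0*d0*d3 + (1/2)*a3*b1*c2*d0 + (-1/2)*a3*b1*c0*d2 + (1/2)*a3*a3*c0*c0 + (1/2)*a3*a3*b2*c0*c2*d0 + (1/2)*a2*b3*b3*c0*d0*d2 + 1*a2*b2*c0*d0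 + (1/2)*a2*b2*b3*c3*d0*d0 + (1/2)*a2*b2*b3*c0*d0*d3 + (1/2)*a2*b1*c3*d0 + (-1/2)*a2*b1*c0*d3 + (1/2)*a2*a3*b3*c0*c2*d0 + (1/2)*a2*a3*b3*c0*c0*d2 + (1/2)*a2*a3*b2*c0*c3*d0 + (1/2)*a2*a3*b2*c0*c0*d3 + (1/2)*a2*a3*a3*c0*c0*c2 + (1/2)*a2*a2*c0*c0 + (1/2)*a2*a2*b3*c0*c3*d0 + (1/2)*a2*a2*a3*c0*c0*c3 + (-1/2)*a1*b3*c2*d0 + (1/2)*a1*b3*c0*d2 + (-1/2)*a1*b2*c3*d0 + (1/2)*a1*b2*c0*d3) * h01 + ((-1/2)*b3*d0 + (-1/2)*b1*b3*d0*d1 + (-1/2)*b1*b2*d0*d0 + (-1/2)*b1*b2*b3*d0*d0*d3 + (-1/2)*a3*c0 + (-1/2)*a3*b2*b3*c1*d0*d0 + (1/2)*a3*b2*b3*c0*d0*d1 + (-1/2)*a3*b1*c1*d0 + (-1/2)*a3*b1*b2*c0*d0*d3 + (-1/2)*a3*a3*b2*c0*c1*d0 + (1/2)*a3*a3*b2*c0*c0*d1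 + (1/2)*a2*b3*b3*c1*d0*d0 + (-1/2)*a2*b3*b3*c0*d0*d1 + (-1/2)*a2*b1*c0*d0 + (-1/2)*a2*b1*b3*c3*d0*d0 + (1/2)*a2*a3*b3*c0*c1*d0 + (-1/2)*a2*a3*b3*c0*c0*d1 + (-1/2)*a2*a3*b1*c0*c3*d0 + (-1/2)*a1*b3*c0*d1 + (-1/2)*a1*b2*c0*d0 + (-1/2)*a1*b2*b3*c0*d0*d3 + (-1/2)*a1*a3*c0*c1 + (-1/2)*a1*a3*b2*c0*c0*d3 + (-1/2)*a1*a2*c0*c0 + (-1/2)*a1*a2*b3*c0*c3*d0 + (-1/2)*a1*a2*a3*c0*c0*c3) * h02 + (-1*b3*d1 + (1/2)*b2*d0 + (-1/2)*b1*b3*d0*d0 + (-1/2)*b1*b2*d0*d1 + (-1/2)*b1*b2*b3*d0*d0*d2 - 1*a3*c1 + (1/2)*a3*b2*b2*c1*d0*d0 + (-1/2)*a3*b2*b2*c0*d0*d1 + (-1/2)*a3*b1*c0*d0 + (-1/2)*a3*b1*b2*c2*d0*d0 + (1/2)*a2*c0 + (-1/2)*a2*b2*b3*c1*d0*d0 +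 (1/2)*a2*b2*b3*c0*d0*d1 + (-1/2)*a2*b1*c1*d0 + (-1/2)*a2*b1*b3*c0*d0*d2 + (1/2)*a2*a3*b2*c0*c1*d0 + (-1/2)*a2*a3*b2*c0*c0*d1 + (-1/2)*a2*a3*b1*c0*c2*d0 + (-1/2)*a2*a2*b3*c0*c1*d0 + (1/2)*a2*a2*b3*c0*c0*d1 + (-1/2)*a1*b3*c0*d0 + (-1/2)*a1*b2*c0*d1 + (-1/2)*a1*b2*b3*c0*d0*d2 + (-1/2)*a1*a3*c0*c0 + (-1/2)*a1*a3*b2*c0*c2*d0 + (-1/2)*a1*a2*c0*c1 + (-1/2)*a1*a2*b3*c0*c0*d2 + (-1/2)*a1*a2*a3*c0*c0*c2) * h03 + ((1/2)*b3*d1 + (-1/2)*b2*d0 + (1/2)*b2*b3*d0*d3 + (1/2)*b1*b3*d0*d0 + (1/2)*a3*c1 + (1/2)*a3*b2*c0*d3 + (1/2)*a3*b1*c0*d0 + (-1/2)*a2*c0 + (1/2)*a2*b3*c3*d0 + (1/2)*a2*a3*c0*c3 + (1/2)*a1*b3*c0*d0 + (1/2)*a1*a3*c0*c0) * h12 + ((1/2)*b3*d0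 + (-1/2)*b2*d1 + (1/2)*b2*b3*d0*d2 + (1/2)*b1*b2*d0*d0 + (1/2)*a3*c0 + (1/2)*a3*b2*c2*d0 + (-1/2)*a2*c1 + (1/2)*a2*b3*c0*d2 + (1/2)*a2*b1*c0*d0 + (1/2)*a2*a3*c0*c2 + (1/2)*a1*b2*c0*d0 + (1/2)*a1*a2*c0*c0) * h13 + ((1/2) - 1*b2*b3*d0*d1 + (-1/2)*b1*b1*d0*d0 + (-1/2)*a3*b2*c1*d0 + (-1/2)*a3*b2*c0*d1 + (-1/2)*a2*b3*c1*d0 + (-1/2)*a2*b3*c0*d1 - 1*a2*a3*c0*c1 - 1*a1*b1*c0*d0 + (-1/2)*a1*a1*c0*c0) * h23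
  have hT22 : ((a0*b3 - a3*b0) + (a1*b2 - a2*b1)) * ((c0*d3 - c3*d0) - (c1*d2 - c2*d1)) = 0 := by
    linear_combination (1*b3*d3 + 1*a3*c3 + (-1/2)*a3*b2*b3*c2*d1*d1 + (1/2)*a3*b2*b3*c1*d1*d2 + (-1/2)*a3*b2*b2*c3*d1*d1 + (1/2)*a3*b2*b2*c1*d1*d3 + (1/2)*a3*b1*b3*c2*d1*d2 + (-1/2)*a3*b1*b3*c1*d2*d2 + (1/2)*a3*b1*b2*c3*d1*d2 + (-1/2)*a3*b1*b2*c2*d1*d3 + (-1/2)*a3*a3*b2*c1*c2*d1 + (1/2)*a3*a3*b2*c1*c1*d2 + (1/2)*a3*a3*b1*c2*c2*d1 + (-1/2)*a3*a3*b1*c1*c2*d2 + (1/2)*a2*b3*b3*c2*d1*d1 + (-1/2)*a2*b3*b3*c1*d1*d2 + (1/2)*a2*b2*b3*c3*d1*d1 + (-1/2)*a2*b2*b3*c1*d1*d3 + (1/2)*a2*b1*b3*c2*d1*d3 + (-1/2)*a2*b1*b3*c1*d2*d3 + (1/2)*a2*a3*b3*c1*c2*d1 + (-1/2)*a2*a3*b3*c1*c1*d2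 + (-1/2)*a2*a3*b2*c1*c3*d1 + (1/2)*a2*a3*b2*c1*c1*d3 + (1/2)*a2*a3*b1*c2*c3*d1 + (-1/2)*a2*a3*b1*c1*c2*d3 + (1/2)*a2*a2*b3*c1*c3*d1 + (-1/2)*a2*a2*b3*c1*c1*d3 + (-1/2)*a1*b3*b3*c2*d1*d2 + (1/2)*a1*b3*b3*c1*d2*d2 + (-1/2)*a1*b2*b3*c3*d1*d2 + (1/2)*a1*b2*b3*c1*d2*d3 + (-1/2)*a1*a3*b3*c2*c2*d1 + (1/2)*a1*a3*b3*c1*c2*d2 + (-1/2)*a1*a3*b2*c2*c3*d1 + (1/2)*a1*a3*b2*c1*c3*d2 + (-1/2)*a1*a2*b3*c1*c3*d2 + (1/2)*a1*a2*b3*c1*c2*d3) * h00 + ((1/2)*b3*b3*d2*d2 - 1*b2*d2 + (1/2)*b2*b3*d2*d3 + (-1/2)*b0*b3*b3*d0*d2*d2 + (-1/2)*b0*b2*b3*d0*d2*d3 + 1*a3*b3*c2*d2 + (1/2)*a3*b2*c2*d3 - 1*a3*b2*b3*c2*d0*d0 + 1*a3*b2*b3*c0*d0*d2 + (-1/2)*a3*b0*b3*c2*d0*d2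 + (-1/2)*a3*b0*b3*c0*d2*d2 + (-1/2)*a3*b0*b2*c2*d0*d3 + (1/2)*a3*a3*c2*c2 - 1*a3*a3*b2*c0*c2*d0 + 1*a3*a3*b2*c0*c0*d2 + (-1/2)*a3*a3*b0*c0*c2*d2 - 1*a2*c2 + (1/2)*a2*b3*c3*d2 + 1*a2*b3*b3*c2*d0*d0 - 1*a2*b3*b3*c0*d0*d2 + (-1/2)*a2*b0*b3*c0*d2*d3 + (1/2)*a2*a3*c2*c3 + 1*a2*a3*b3*c0*c2*d0 - 1*a2*a3*b3*c0*c0*d2 + (-1/2)*a2*a3*b0*c0*c2*d3 + (-1/2)*a0*b3*b3*c2*d0*d2 + (-1/2)*a0*b2*b3*c3*d0*d2 + (-1/2)*a0*a3*b3*c2*c2*d0 + (-1/2)*a0*a3*b3*c0*c2*d2 + (-1/2)*a0*a3*b2*c2*c3*d0 + (-1/2)*a0*a3*a3*c0*c2*c2 + (-1/2)*a0*a2*b3*c0*c3*d2 + (-1/2)*a0*a2*a3*c0*c2*c3) * h11 + (-1 + (1/2)*b3*b3*d1*d1 + 1*b3*b3*d0*d0 + (1/2)*b1*b3*d1*d3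 - 1*b1*b3*b3*d0*d0*d1 + (-1/2)*b0*b3*b3*d0*d1*d1 + (-1/2)*b0*b1*b3*d0*d1*d3 + 1*a3*b3*c1*d1 + 2*a3*b3*c0*d0 + (1/2)*a3*b1*c1*d3 - 1*a3*b1*b3*c1*d0*d0 - 1*a3*b1*b3*c0*d0*d1 + (-1/2)*a3*b0*b3*c1*d0*d1 + (-1/2)*a3*b0*b3*c0*d1*d1 + (-1/2)*a3*b0*b1*c1*d0*d3 + (1/2)*a3*a3*c1*c1 + 1*a3*a3*c0*c0 - 1*a3*a3*b1*c0*c1*d0 + (-1/2)*a3*a3*b0*c0*c1*d1 + (1/2)*a1*b3*c3*d1 - 1*a1*b3*b3*c0*d0*d1 + (-1/2)*a1*b0*b3*c0*d1*d3 + (1/2)*a1*a3*c1*c3 - 1*a1*a3*b3*c0*c1*d0 - 1*a1*a3*b3*c0*c0*d1 + (-1/2)*a1*a3*b0*c0*c1*d3 - 1*a1*a3*a3*c0*c0*c1 + (-1/2)*a0*b3*b3*c1*d0*d1 + (-1/2)*a0*b1*b3*c3*d0*d1 + (-1/2)*a0*a3*b3*c1*c1*d0 + (-1/2)*a0*a3*b3*c0*c1*d1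 + (-1/2)*a0*a3*b1*c1*c3*d0 + (-1/2)*a0*a3*a3*c0*c1*c1 + (-1/2)*a0*a1*b3*c0*c3*d1 + (-1/2)*a0*a1*a3*c0*c1*c3) * h22 + (1 + (-1/2)*b2*b2*d1*d1 + (1/2)*b1*b2*d1*d2 + (1/2)*b0*b2*b2*d0*d1*d1 + (-1/2)*b0*b1*b2*d0*d1*d2 - 1*a2*b2*c1*d1 + (1/2)*a2*b1*c1*d2 + (1/2)*a2*b0*b2*c1*d0*d1 + (1/2)*a2*b0*b2*c0*d1*d1 + (-1/2)*a2*b0*b1*c1*d0*d2 + (-1/2)*a2*a2*c1*c1 + (1/2)*a2*a2*b0*c0*c1*d1 + (1/2)*a1*b2*c2*d1 + (-1/2)*a1*b0*b2*c0*d1*d2 + (1/2)*a1*a2*c1*c2 + (-1/2)*a1*a2*b0*c0*c1*d2 + (1/2)*a0*b2*b2*c1*d0*d1 + (-1/2)*a0*b1*b2*c2*d0*d1 + (1/2)*a0*a2*b2*c1*c1*d0 + (1/2)*a0*a2*b2*c0*c1*d1 + (-1/2)*a0*a2*b1*c1*c2*d0 + (1/2)*a0*a2*a2*c0*c1*c1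 + (-1/2)*a0*a1*b2*c0*c2*d1 + (-1/2)*a0*a1*a2*c0*c1*c2) * h33 + (-1*b3*d2 + (1/2)*b3*b3*d0*d1 + (1/2)*b2*b3*b3*d0*d1*d2 + (-1/2)*b2*b2*d0*d1 + (-1/2)*b2*b2*b3*d0*d1*d3 - 1*a3*c2 + (1/2)*a3*b3*c1*d0 + (1/2)*a3*b3*c0*d1 + (1/2)*a3*b2*b3*c2*d0*d1 + (1/2)*a3*b2*b3*c1*d0*d2 + (-1/2)*a3*b2*b2*c0*d1*d3 + (-1/2)*a3*b1*b3*c2*d0*d2 + (1/2)*a3*b1*b3*c0*d2*d2 + (1/2)*a3*a3*c0*c1 + (1/2)*a3*a3*b2*c1*c2*d0 + (-1/2)*a3*a3*b1*c2*c2*d0 + (1/2)*a3*a3*b1*c0*c2*d2 + (1/2)*a2*b3*b3*c0*d1*d2 + (-1/2)*a2*b2*c1*d0 + (-1/2)*a2*b2*c0*d1 + (-1/2)*a2*b2*b3*c3*d0*d1 + (-1/2)*a2*b2*b3*c1*d0*d3 + (-1/2)*a2*b1*b3*c3*d0*d2 + (1/2)*a2*b1*b3*c0*d2*d3 + (1/2)*a2*a3*b3*c0*c2*d1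 + (1/2)*a2*a3*b3*c0*c1*d2 + (-1/2)*a2*a3*b2*c0*c3*d1 + (-1/2)*a2*a3*b2*c0*c1*d3 + (-1/2)*a2*a3*b1*c2*c3*d0 + (1/2)*a2*a3*b1*c0*c2*d3 + (1/2)*a2*a3*a3*c0*c1*c2 + (-1/2)*a2*a2*c0*c1 + (-1/2)*a2*a2*b3*c1*c3*d0 + (-1/2)*a2*a2*a3*c0*c1*c3 + (1/2)*a1*b3*b3*c2*d0*d2 + (-1/2)*a1*b3*b3*c0*d2*d2 + (1/2)*a1*b2*b3*c3*d0*d2 + (-1/2)*a1*b2*b3*c0*d2*d3 + (1/2)*a1*a3*b3*c2*c2*d0 + (-1/2)*a1*a3*b3*c0*c2*d2 + (1/2)*a1*a3*b2*c2*c3*d0 + (-1/2)*a1*a3*b2*c0*c2*d3) * h01 + (1*b3*d1 + (-1/2)*b3*b3*d0*d2 + (1/2)*b1*b3*b3*d0*d1*d2 + (1/2)*b1*b2*d0*d1 + (1/2)*b1*b2*b3*d0*d1*d3 + 1*a3*c1 + (-1/2)*a3*b3*c2*d0 + (-1/2)*a3*b3*c0*d2 + (-1/2)*a3*b2*b3*c1*d0*d1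 + (1/2)*a3*b2*b3*c0*d1*d1 + (1/2)*a3*b1*b3*c2*d0*d1 + (1/2)*a3*b1*b3*c1*d0*d2 + (1/2)*a3*b1*b2*c0*d1*d3 + (-1/2)*a3*a3*c0*c2 + (-1/2)*a3*a3*b2*c1*c1*d0 + (1/2)*a3*a3*b2*c0*c1*d1 + (1/2)*a3*a3*b1*c1*c2*d0 + (1/2)*a2*b3*b3*c1*d0*d1 + (-1/2)*a2*b3*b3*c0*d1*d1 + (1/2)*a2*b1*c1*d0 + (1/2)*a2*b1*b3*c3*d0*d1 + (1/2)*a2*b1*b3*c1*d0*d3 + (-1/2)*a2*b1*b3*c0*d1*d3 + (1/2)*a2*a3*b3*c1*c1*d0 + (-1/2)*a2*a3*b3*c0*c1*d1 + (1/2)*a2*a3*b1*c1*c3*d0 + (1/2)*a1*b3*b3*c0*d1*d2 + (1/2)*a1*b2*c0*d1 + (1/2)*a1*b2*b3*c0*d1*d3 + (1/2)*a1*a3*b3*c0*c2*d1 + (1/2)*a1*a3*b3*c0*c1*d2 + (-1/2)*a1*a3*b2*c1*c3*d0 + (1/2)*a1*a3*b2*c0*c3*d1 + (1/2)*a1*a3*b2*c0*c1*d3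 + (1/2)*a1*a3*a3*c0*c1*c2 + (1/2)*a1*a2*c0*c1 + (1/2)*a1*a2*b3*c1*c3*d0 + (1/2)*a1*a2*a3*c0*c1*c3) * h02 + (-1*b3*d0 + (-1/2)*b2*b3*d0*d2 + (1/2)*b1*b3*d0*d1 + 1*b1*b2*b3*d0*d1*d2 - 1*a3*c0 + (-1/2)*a3*b2*c2*d0 + (-1/2)*a3*b2*b2*c1*d0*d1 + (1/2)*a3*b2*b2*c0*d1*d1 + (1/2)*a3*b1*c1*d0 + 1*a3*b1*b2*c2*d0*d1 + (1/2)*a3*b1*b2*c1*d0*d2 + (-1/2)*a3*b1*b2*c0*d1*d2 + (-1/2)*a2*b3*c0*d2 + (1/2)*a2*b2*b3*c1*d0*d1 + (-1/2)*a2*b2*b3*c0*d1*d1 + (1/2)*a2*b1*b3*c1*d0*d2 + (1/2)*a2*b1*b3*c0*d1*d2 + (-1/2)*a2*a3*c0*c2 + (-1/2)*a2*a3*b2*c1*c1*d0 + (1/2)*a2*a3*b2*c0*c1*d1 + 1*a2*a3*b1*c1*c2*d0 + (1/2)*a2*a2*b3*c1*c1*d0 + (-1/2)*a2*a2*b3*c0*c1*d1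 + (1/2)*a1*b3*c0*d1 + 1*a1*b2*b3*c0*d1*d2 + (1/2)*a1*a3*c0*c1 + (1/2)*a1*a3*b2*c1*c2*d0 + (1/2)*a1*a3*b2*c0*c2*d1 + (-1/2)*a1*a2*b3*c1*c2*d0 + (1/2)*a1*a2*b3*c0*c2*d1 + 1*a1*a2*b3*c0*c1*d2 + 1*a1*a2*a3*c0*c1*c2) * h03 + ((-1/2)*b3*b3*d1*d2 + (1/2)*b2*d1 + (-1/2)*b2*b3*d1*d3 + (-1/2)*b1*b3*b3*d0*d0*d2 + (-1/2)*a3*b3*c2*d1 + (-1/2)*a3*b3*c1*d2 + (-1/2)*a3*b2*c1*d3 + (1/2)*a3*b2*b3*c1*d0*d0 + (-1/2)*a3*b2*b3*c0*d0*d1 + (-1/2)*a3*b1*b3*c2*d0*d0 + (-1/2)*a3*b1*b3*c0*d0*d2 + (-1/2)*a3*a3*c1*c2 + (1/2)*a3*a3*b2*c0*c1*d0 + (-1/2)*a3*a3*b2*c0*c0*d1 + (-1/2)*a3*a3*b1*c0*c2*d0 + (1/2)*a2*c1 + (-1/2)*a2*b3*c3*d1 + (-1/2)*a2*b3*b3*c1*d0*d0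 + (1/2)*a2*b3*b3*c0*d0*d1 + (-1/2)*a2*a3*c1*c3 + (-1/2)*a2*a3*b3*c0*c1*d0 + (1/2)*a2*a3*b3*c0*c0*d1 + (-1/2)*a1*b3*b3*c0*d0*d2 + (-1/2)*a1*a3*b3*c0*c2*d0 + (-1/2)*a1*a3*b3*c0*c0*d2 + (-1/2)*a1*a3*a3*c0*c0*c2) * h12 + ((-1/2)*b3*d1 - 1*b2*d0 - 1*b2*b3*d1*d2 + (-1/2)*b1*b2*b3*d0*d0*d2 + (-1/2)*a3*c1 - 1*a3*b2*c2*d1 + (1/2)*a3*b2*b2*c1*d0*d0 + (-1/2)*a3*b2*b2*c0*d0*d1 + (-1/2)*a3*b1*b2*c2*d0*d0 - 1*a2*c0 - 1*a2*b3*c1*d2 + (-1/2)*a2*b2*b3*c1*d0*d0 + (1/2)*a2*b2*b3*c0*d0*d1 + (-1/2)*a2*b1*b3*c0*d0*d2 - 1*a2*a3*c1*c2 + (1/2)*a2*a3*b2*c0*c1*d0 + (-1/2)*a2*a3*b2*c0*c0*d1 + (-1/2)*a2*a3*b1*c0*c2*d0 + (-1/2)*a2*a2*b3*c0*c1*d0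 + (1/2)*a2*a2*b3*c0*c0*d1 + (-1/2)*a1*b2*b3*c0*d0*d2 + (-1/2)*a1*a3*b2*c0*c2*d0 + (-1/2)*a1*a2*b3*c0*c0*d2 + (-1/2)*a1*a2*a3*c0*c0*c2) * h13 + ((1/2)*b3*d2 + 1*b2*b3*d1*d1 + 1*b1*d0 + (1/2)*b1*b1*b3*d0*d0*d2 + (1/2)*a3*c2 + 1*a3*b2*c1*d1 + (-1/2)*a3*b1*b2*c1*d0*d0 + (1/2)*a3*b1*b2*c0*d0*d1 + (1/2)*a3*b1*b1*c2*d0*d0 + 1*a2*b3*c1*d1 + (1/2)*a2*b1*b3*c1*d0*d0 + (-1/2)*a2*b1*b3*c0*d0*d1 + 1*a2*a3*c1*c1 + 1*a1*c0 + 1*a1*b1*b3*c0*d0*d2 + (-1/2)*a1*a3*b2*c0*c1*d0 + (1/2)*a1*a3*b2*c0*c0*d1 + 1*a1*a3*b1*c0*c2*d0 + (1/2)*a1*a2*b3*c0*c1*d0 + (-1/2)*a1*a2*b3*c0*c0*d1 + (1/2)*a1*a1*b3*c0*c0*d2 + (1/2)*a1*a1*a3*c0*c0*c2) * h23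
  have hT23 : ((a0*b3 - a3*b0) + (a1*b2 - a2*b1)) * ((c0*d1 - c1*d0) + (c2*d3 - c3*d2)) = 0 := by
    linear_combination (1*b3*d1 + 1*a3*c1 + (-1/2)*a3*b2*c2*d1 + (1/2)*a3*b2*c1*d2 + (-1/2)*a3*b1*b3*c2*d0*d1 + (1/2)*a3*b1*b3*c1*d0*d2 + (1/2)*a3*b1*b2*c3*d0*d1 + (-1/2)*a3*b1*b2*c1*d0*d3 + (-1/2)*a3*b1*b1*c3*d0*d2 + (1/2)*a3*b1*b1*c2*d0*d3 + (-1/2)*a3*a3*b1*c0*c2*d1 + (1/2)*a3*a3*b1*c0*c1*d2 + (1/2)*a2*b3*c2*d1 + (-1/2)*a2*b3*c1*d2 + (-1/2)*a2*b1*c3*d2 + (1/2)*a2*b1*c2*d3 + (1/2)*a2*a3*b1*c0*c3*d1 + (-1/2)*a2*a3*b1*c0*c1*d3 + (1/2)*a1*b3*b3*c2*d0*d1 + (-1/2)*a1*b3*b3*c1*d0*d2 + (1/2)*a1*b2*c3*d2 + (-1/2)*a1*b2*c2*d3 + (-1/2)*a1*b2*b3*c3*d0*d1 + (1/2)*a1*b2*b3*c1*d0*d3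 + (1/2)*a1*b1*b3*c3*d0*d2 + (-1/2)*a1*b1*b3*c2*d0*d3 + (1/2)*a1*a3*b3*c0*c2*d1 + (-1/2)*a1*a3*b3*c0*c1*d2 + (-1/2)*a1*a3*b1*c0*c3*d2 + (1/2)*a1*a3*b1*c0*c2*d3 + (-1/2)*a1*a2*b3*c0*c3*d1 + (1/2)*a1*a2*b3*c0*c1*d3 + (1/2)*a1*a1*b3*c0*c3*d2 + (-1/2)*a1*a1*b3*c0*c2*d3) * h00 + ((-1/2)*b3*b3*d0*d2 - 1*b2*d0 + (1/2)*b2*b3*d0*d3 + (1/2)*b0*b3*b3*d0*d0*d2 + (-1/2)*b0*b2*b3*d0*d0*d3 + (-1/2)*a3*b3*c2*d0 + (-1/2)*a3*b3*c0*d2 + (1/2)*a3*b2*c0*d3 + 1*a3*b0*b3*c0*d0*d2 + (-1/2)*a3*b0*b2*c0*d0*d3 + (-1/2)*a3*a3*c0*c2 + (1/2)*a3*a3*b0*c0*c0*d2 - 1*a2*c0 + (1/2)*a2*b3*c3*d0 + (-1/2)*a2*b0*b3*c0*d0*d3 + (1/2)*a2*a3*c0*c3 + (-1/2)*a2*a3*b0*c0*c0*d3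 + (1/2)*a0*b3*b3*c2*d0*d0 + (-1/2)*a0*b2*b3*c3*d0*d0 + 1*a0*a3*b3*c0*c2*d0 + (-1/2)*a0*a3*b2*c0*c3*d0 + (1/2)*a0*a3*a3*c0*c0*c2 + (-1/2)*a0*a2*b3*c0*c3*d0 + (-1/2)*a0*a2*a3*c0*c0*c3) * h11 + ((1/2)*b3*d1 + (-1/2)*b1*d3 + (-1/2)*b0*b3*d0*d1 + (-1/2)*b0*b1*d0*d3 + (1/2)*a3*c1 + (-1/2)*a3*b0*c0*d1 + (-1/2)*a1*c3 + (-1/2)*a1*b0*c0*d3 + (-1/2)*a0*b3*c1*d0 + (-1/2)*a0*b1*c3*d0 + (-1/2)*a0*a3*c0*c1 + (-1/2)*a0*a1*c0*c3) * h22 + ((1/2)*b1*b2*d0*d1 + (-1/2)*b1*b1*d0*d2 + 1*b0*d2 + (-1/2)*b0*b1*b2*d0*d0*d1 + (1/2)*b0*b1*b1*d0*d0*d2 + (1/2)*a2*b1*c1*d0 + (-1/2)*a2*b0*b1*c0*d0*d1 + (1/2)*a1*b2*c0*d1 + (-1/2)*a1*b1*c2*d0 + (-1/2)*a1*b1*c0*d2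 + (-1/2)*a1*b0*b2*c0*d0*d1 + 1*a1*b0*b1*c0*d0*d2 + (1/2)*a1*a2*c0*c1 + (-1/2)*a1*a2*b0*c0*c0*d1 + (-1/2)*a1*a1*c0*c2 + (1/2)*a1*a1*b0*c0*c0*d2 + 1*a0*c2 + (-1/2)*a0*b1*b2*c1*d0*d0 + (1/2)*a0*b1*b1*c2*d0*d0 + (-1/2)*a0*a2*b1*c0*c1*d0 + (-1/2)*a0*a1*b2*c0*c1*d0 + 1*a0*a1*b1*c0*c2*d0 + (-1/2)*a0*a1*a2*c0*c0*c1 + (1/2)*a0*a1*a1*c0*c0*c2) * h33 + ((-1/2)*b3*d0 + (1/2)*b2*b3*d0*d2 + (1/2)*b1*b2*d0*d0 + (1/2)*b1*b2*b3*d0*d0*d3 + (-1/2)*a3*c0 + (1/2)*a3*b2*c2*d0 + (1/2)*a3*b1*b3*c2*d0*d0 + (-1/2)*a3*b1*b3*c0*d0*d2 + (1/2)*a3*b1*b2*c0*d0*d3 + (1/2)*a3*a3*b1*c0*c2*d0 + (-1/2)*a3*a3*b1*c0*c0*d2 + (1/2)*a2*b3*c0*d2 + (1/2)*a2*b1*c0*d0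 + (1/2)*a2*b1*b3*c0*d0*d3 + (1/2)*a2*a3*c0*c2 + (1/2)*a2*a3*b1*c0*c0*d3 + (-1/2)*a1*b3*b3*c2*d0*d0 + (1/2)*a1*b3*b3*c0*d0*d2 + (1/2)*a1*b2*c0*d0 + (1/2)*a1*b2*b3*c3*d0*d0 + (-1/2)*a1*a3*b3*c0*c2*d0 + (1/2)*a1*a3*b3*c0*c0*d2 + (1/2)*a1*a3*b2*c0*c3*d0 + (1/2)*a1*a2*c0*c0 + (1/2)*a1*a2*b3*c0*c3*d0 + (1/2)*a1*a2*a3*c0*c0*c3) * h01 + (-1 + (1/2)*b3*b3*d0*d0 + (-1/2)*b1*b3*b3*d0*d0*d1 + (-1/2)*b1*b1*d0*d0 + (-1/2)*b1*b1*b3*d0*d0*d3 + 1*a3*b3*c0*d0 + (-1/2)*a3*b2*c1*d0 + (1/2)*a3*b2*c0*d1 + (-1/2)*a3*b1*b3*c1*d0*d0 + (-1/2)*a3*b1*b3*c0*d0*d1 + (-1/2)*a3*b1*b1*c0*d0*d3 + (1/2)*a3*a3*c0*c0 + (-1/2)*a3*a3*b1*c0*c1*d0 + (1/2)*a2*b3*c1*d0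 + (-1/2)*a2*b3*c0*d1 + (1/2)*a2*b1*c3*d0 + (-1/2)*a2*b1*c0*d3 + (-1/2)*a1*b3*b3*c0*d0*d1 + (-1/2)*a1*b2*c3*d0 + (1/2)*a1*b2*c0*d3 - 1*a1*b1*c0*d0 + (-1/2)*a1*b1*b3*c3*d0*d0 + (-1/2)*a1*b1*b3*c0*d0*d3 + (-1/2)*a1*a3*b3*c0*c1*d0 + (-1/2)*a1*a3*b3*c0*c0*d1 + (-1/2)*a1*a3*b1*c0*c3*d0 + (-1/2)*a1*a3*b1*c0*c0*d3 + (-1/2)*a1*a3*a3*c0*c0*c1 + (-1/2)*a1*a1*c0*c0 + (-1/2)*a1*a1*b3*c0*c3*d0 + (-1/2)*a1*a1*a3*c0*c0*c3) * h02 + (-1*b3*d2 + (-1/2)*b2*b3*d0*d0 + (1/2)*b1*d0 + (1/2)*b1*b2*d0*d2 + (1/2)*b1*b2*b3*d0*d0*d1 - 1*a3*c2 + (-1/2)*a3*b2*c0*d0 + (1/2)*a3*b1*b2*c1*d0*d0 + (-1/2)*a3*b1*b1*c2*d0*d0 + (1/2)*a3*b1*b1*c0*d0*d2 + (-1/2)*a2*b3*c0*d0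 + (1/2)*a2*b1*c0*d2 + (1/2)*a2*b1*b3*c0*d0*d1 + (-1/2)*a2*a3*c0*c0 + (1/2)*a2*a3*b1*c0*c1*d0 + (1/2)*a1*c0 + (1/2)*a1*b2*c2*d0 + (1/2)*a1*b2*b3*c0*d0*d1 + (1/2)*a1*b1*b3*c2*d0*d0 + (-1/2)*a1*b1*b3*c0*d0*d2 + (1/2)*a1*a3*b2*c0*c1*d0 + (-1/2)*a1*a3*b1*c0*c2*d0 + (1/2)*a1*a3*b1*c0*c0*d2 + (1/2)*a1*a2*c0*c2 + (1/2)*a1*a2*b3*c0*c0*d1 + (1/2)*a1*a2*a3*c0*c0*c1 + (1/2)*a1*a1*b3*c0*c2*d0 + (-1/2)*a1*a1*b3*c0*c0*d2) * h03 + ((1/2)*b3*b3*d0*d1 + (1/2)*b2*d3 + (-1/2)*b2*b3*d0*d0 + (1/2)*b1*d0 + (1/2)*a3*b3*c1*d0 + (1/2)*a3*b3*c0*d1 + (-1/2)*a3*b2*c0*d0 + (1/2)*a3*a3*c0*c1 + (1/2)*a2*c3 + (-1/2)*a2*b3*c0*d0 + (-1/2)*a2*a3*c0*c0 + (1/2)*a1*c0)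 * h12 + ((1/2) + (-1/2)*b2*b3*d0*d1 + (1/2)*b2*b2*d0*d0 + (1/2)*b1*b3*d0*d2 + (-1/2)*a3*b2*c0*d1 + (1/2)*a3*b1*c2*d0 + (-1/2)*a2*b3*c1*d0 + 1*a2*b2*c0*d0 + (-1/2)*a2*a3*c0*c1 + (1/2)*a2*a2*c0*c0 + (1/2)*a1*b3*c0*d2 + (1/2)*a1*a3*c0*c2) * h13 + ((1/2)*b3*d0 + (-1/2)*b2*d1 + (-1/2)*b1*b3*d0*d1 + (-1/2)*b1*b2*d0*d0 + (1/2)*a3*c0 + (-1/2)*a3*b1*c1*d0 + (-1/2)*a2*c1 + (-1/2)*a2*b1*c0*d0 + (-1/2)*a1*b3*c0*d1 + (-1/2)*a1*b2*c0*d0 + (-1/2)*a1*a3*c0*c1 + (-1/2)*a1*a2*c0*c0) * h23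
  have hT31 : ((a0*b1 - a1*b0) - (a2*b3 - a3*b2)) * ((c0*d2 - c2*d0) + (c1*d3 - c3*d1)) = 0 := by
    linear_combination (1*b1*d2 + (1/2)*a3*b2*c3*d1 + (-1/2)*a3*b2*c1*d3 + (1/2)*a3*b1*c3*d2 + (-1/2)*a3*b1*c2*d3 + (-1/2)*a2*b3*c3*d1 + (1/2)*a2*b3*c1*d3 + (1/2)*a2*b1*b3*c2*d0*d1 + (-1/2)*a2*b1*b3*c1*d0*d2 + (-1/2)*a2*b1*b2*c3*d0*d1 + (1/2)*a2*b1*b2*c1*d0*d3 + (1/2)*a2*b1*b1*c3*d0*d2 + (-1/2)*a2*b1*b1*c2*d0*d3 + (1/2)*a2*a3*b1*c0*c2*d1 + (-1/2)*a2*a3*b1*c0*c1*d2 + (-1/2)*a2*a2*b1*c0*c3*d1 + (1/2)*a2*a2*b1*c0*c1*d3 + 1*a1*c2 + (-1/2)*a1*b3*c3*d2 + (1/2)*a1*b3*c2*d3 + (-1/2)*a1*b2*b3*c2*d0*d1 + (1/2)*a1*b2*b3*c1*d0*d2 + (1/2)*a1*b2*b2*c3*d0*d1 + (-1/2)*a1*b2*b2*c1*d0*d3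 + (-1/2)*a1*b1*b2*c3*d0*d2 + (1/2)*a1*b1*b2*c2*d0*d3 + (-1/2)*a1*a3*b2*c0*c2*d1 + (1/2)*a1*a3*b2*c0*c1*d2 + (1/2)*a1*a2*b2*c0*c3*d1 + (-1/2)*a1*a2*b2*c0*c1*d3 + (1/2)*a1*a2*b1*c0*c3*d2 + (-1/2)*a1*a2*b1*c0*c2*d3 + (-1/2)*a1*a1*b2*c0*c3*d2 + (1/2)*a1*a1*b2*c0*c2*d3) * h00 + ((1/2)*b2*b3*d0*d2 + (-1/2)*b2*b2*d0*d3 - 1*b0*d3 + (-1/2)*b0*b2*b3*d0*d0*d2 + (1/2)*b0*b2*b2*d0*d0*d3 + (1/2)*a3*b2*c2*d0 + (-1/2)*a3*b0*b2*c0*d0*d2 + (1/2)*a2*b3*c0*d2 + (-1/2)*a2*b2*c3*d0 + (-1/2)*a2*b2*c0*d3 + (-1/2)*a2*b0*b3*c0*d0*d2 + 1*a2*b0*b2*c0*d0*d3 + (1/2)*a2*a3*c0*c2 + (-1/2)*a2*a3*b0*c0*c0*d2 + (-1/2)*a2*a2*c0*c3 + (1/2)*a2*a2*b0*c0*c0*d3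 - 1*a0*c3 + (-1/2)*a0*b2*b3*c2*d0*d0 + (1/2)*a0*b2*b2*c3*d0*d0 + (-1/2)*a0*a3*b2*c0*c2*d0 + (-1/2)*a0*a2*b3*c0*c2*d0 + 1*a0*a2*b2*c0*c3*d0 + (-1/2)*a0*a2*a3*c0*c0*c2 + (1/2)*a0*a2*a2*c0*c0*c3) * h11 + (1*b3*d0 + (1/2)*b1*b3*d0*d1 + (-1/2)*b1*b1*d0*d3 + (-1/2)*b0*b1*b3*d0*d0*d1 + (1/2)*b0*b1*b1*d0*d0*d3 + 1*a3*c0 + (1/2)*a3*b1*c1*d0 + (-1/2)*a3*b0*b1*c0*d0*d1 + (1/2)*a1*b3*c0*d1 + (-1/2)*a1*b1*c3*d0 + (-1/2)*a1*b1*c0*d3 + (-1/2)*a1*b0*b3*c0*d0*d1 + 1*a1*b0*b1*c0*d0*d3 + (1/2)*a1*a3*c0*c1 + (-1/2)*a1*a3*b0*c0*c0*d1 + (-1/2)*a1*a1*c0*c3 + (1/2)*a1*a1*b0*c0*c0*d3 + (-1/2)*a0*b1*b3*c1*d0*d0 + (1/2)*a0*b1*b1*c3*d0*d0 + (-1/2)*a0*a3*b1*c0*c1*d0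 + (-1/2)*a0*a1*b3*c0*c1*d0 + 1*a0*a1*b1*c0*c3*d0 + (-1/2)*a0*a1*a3*c0*c0*c1 + (1/2)*a0*a1*a1*c0*c0*c3) * h22 + ((-1/2)*b2*d1 + (1/2)*b1*d2 + (-1/2)*b0*b2*d0*d1 + (-1/2)*b0*b1*d0*d2 + (-1/2)*a2*c1 + (-1/2)*a2*b0*c0*d1 + (1/2)*a1*c2 + (-1/2)*a1*b0*c0*d2 + (-1/2)*a0*b2*c1*d0 + (-1/2)*a0*b1*c2*d0 + (-1/2)*a0*a2*c0*c1 + (-1/2)*a0*a1*c0*c2) * h33 + ((1/2)*b2*d0 + (1/2)*b2*b3*d0*d3 + 1*b1*d3 + (1/2)*b1*b3*d0*d0 + (1/2)*b1*b2*b3*d0*d0*d2 + (1/2)*a3*b2*c0*d3 + (1/2)*a3*b1*c0*d0 + (1/2)*a3*b1*b2*c0*d0*d2 + (1/2)*a2*c0 + (1/2)*a2*b3*c3*d0 + (1/2)*a2*b1*b3*c0*d0*d2 + (1/2)*a2*b1*b2*c3*d0*d0 + (-1/2)*a2*b1*b2*c0*d0*d3 + (1/2)*a2*a3*c0*c3 +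 (1/2)*a2*a3*b1*c0*c0*d2 + (1/2)*a2*a2*b1*c0*c3*d0 + (-1/2)*a2*a2*b1*c0*c0*d3 + 1*a1*c3 + (1/2)*a1*b3*c0*d0 + (1/2)*a1*b2*b3*c2*d0*d0 + (-1/2)*a1*b2*b2*c3*d0*d0 + (1/2)*a1*b2*b2*c0*d0*d3 + (1/2)*a1*a3*c0*c0 + (1/2)*a1*a3*b2*c0*c2*d0 + (1/2)*a1*a2*b3*c0*c2*d0 + (-1/2)*a1*a2*b2*c0*c3*d0 + (1/2)*a1*a2*b2*c0*c0*d3 + (1/2)*a1*a2*a3*c0*c0*c2) * h01 + ((-1/2)*b2*b3*d0*d0 + (-1/2)*b1*d0 + (1/2)*b1*b3*d0*d3 + (1/2)*b1*b2*b3*d0*d0*d1 + (-1/2)*a3*b2*c0*d0 + (1/2)*a3*b1*c0*d3 + (1/2)*a3*b1*b2*c0*d0*d1 + (-1/2)*a2*b3*c0*d0 + (1/2)*a2*b1*b3*c1*d0*d0 + (-1/2)*a2*b1*b1*c3*d0*d0 + (1/2)*a2*b1*b1*c0*d0*d3 + (-1/2)*a2*a3*c0*c0 + (1/2)*a2*a3*b1*c0*c1*d0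 + (-1/2)*a1*c0 + (1/2)*a1*b3*c3*d0 + (1/2)*a1*b2*b3*c0*d0*d1 + (1/2)*a1*b1*b2*c3*d0*d0 + (-1/2)*a1*b1*b2*c0*d0*d3 + (1/2)*a1*a3*c0*c3 + (1/2)*a1*a3*b2*c0*c0*d1 + (1/2)*a1*a2*b3*c0*c1*d0 + (-1/2)*a1*a2*b1*c0*c3*d0 + (1/2)*a1*a2*b1*c0*c0*d3 + (1/2)*a1*a2*a3*c0*c0*c1 + (1/2)*a1*a1*b2*c0*c3*d0 + (-1/2)*a1*a1*b2*c0*c0*d3) * h02 + (-1 + (1/2)*b2*b2*d0*d0 + (-1/2)*b1*b2*b2*d0*d0*d1 + (-1/2)*b1*b1*d0*d0 + (-1/2)*b1*b1*b2*d0*d0*d2 + (1/2)*a3*b2*c1*d0 + (-1/2)*a3*b2*c0*d1 + (1/2)*a3*b1*c2*d0 + (-1/2)*a3*b1*c0*d2 + (-1/2)*a2*b3*c1*d0 + (1/2)*a2*b3*c0*d1 + 1*a2*b2*c0*d0 + (-1/2)*a2*b1*b2*c1*d0*d0 + (-1/2)*a2*b1*b2*c0*d0*d1 + (-1/2)*a2*b1*b1*c0*d0*d2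 + (1/2)*a2*a2*c0*c0 + (-1/2)*a2*a2*b1*c0*c1*d0 + (-1/2)*a1*b3*c2*d0 + (1/2)*a1*b3*c0*d2 + (-1/2)*a1*b2*b2*c0*d0*d1 - 1*a1*b1*c0*d0 + (-1/2)*a1*b1*b2*c2*d0*d0 + (-1/2)*a1*b1*b2*c0*d0*d2 + (-1/2)*a1*a2*b2*c0*c1*d0 + (-1/2)*a1*a2*b2*c0*c0*d1 + (-1/2)*a1*a2*b1*c0*c2*d0 + (-1/2)*a1*a2*b1*c0*c0*d2 + (-1/2)*a1*a2*a2*c0*c0*c1 + (-1/2)*a1*a1*c0*c0 + (-1/2)*a1*a1*b2*c0*c2*d0 + (-1/2)*a1*a1*a2*c0*c0*c2) * h03 + ((1/2) + (1/2)*b3*b3*d0*d0 + (-1/2)*b2*b3*d0*d1 + (1/2)*b1*b2*d0*d3 + 1*a3*b3*c0*d0 + (-1/2)*a3*b2*c1*d0 + (1/2)*a3*a3*c0*c0 + (-1/2)*a2*b3*c0*d1 + (1/2)*a2*b1*c3*d0 + (-1/2)*a2*a3*c0*c1 + (1/2)*a1*b2*c0*d3 + (1/2)*a1*a2*c0*c3)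 * h12 + ((-1/2)*b3*d2 + (-1/2)*b2*b3*d0*d0 + (1/2)*b2*b2*d0*d1 + (-1/2)*b1*d0 + (-1/2)*a3*c2 + (-1/2)*a3*b2*c0*d0 + (-1/2)*a2*b3*c0*d0 + (1/2)*a2*b2*c1*d0 + (1/2)*a2*b2*c0*d1 + (-1/2)*a2*a3*c0*c0 + (1/2)*a2*a2*c0*c1 + (-1/2)*a1*c0) * h13 + ((1/2)*b3*d1 + (-1/2)*b2*d0 + (-1/2)*b1*b3*d0*d0 + (-1/2)*b1*b2*d0*d1 + (1/2)*a3*c1 + (-1/2)*a3*b1*c0*d0 + (-1/2)*a2*c0 + (-1/2)*a2*b1*c1*d0 + (-1/2)*a1*b3*c0*d0 + (-1/2)*a1*b2*c0*d1 + (-1/2)*a1*a3*c0*c0 + (-1/2)*a1*a2*c0*c1) * h23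
  have hT32 : ((a0*b1 - a1*b0) - (a2*b3 - a3*b2)) * ((c0*d3 - c3*d0) - (c1*d2 - c2*d1)) = 0 := by
    linear_combination (1*b1*d3 + (-1/2)*a3*b2*c2*d1 + (1/2)*a3*b2*c1*d2 + (1/2)*a3*b1*b3*c2*d0*d1 + (-1/2)*a3*b1*b3*c1*d0*d2 + (-1/2)*a3*b1*b2*c3*d0*d1 + (1/2)*a3*b1*b2*c1*d0*d3 + (1/2)*a3*b1*b1*c3*d0*d2 + (-1/2)*a3*b1*b1*c2*d0*d3 + (1/2)*a3*a3*b1*c0*c2*d1 + (-1/2)*a3*a3*b1*c0*c1*d2 + (1/2)*a2*b3*c2*d1 + (-1/2)*a2*b3*c1*d2 + (-1/2)*a2*b1*c3*d2 + (1/2)*a2*b1*c2*d3 + (-1/2)*a2*a3*b1*c0*c3*d1 + (1/2)*a2*a3*b1*c0*c1*d3 + 1*a1*c3 + (-1/2)*a1*b3*b3*c2*d0*d1 + (1/2)*a1*b3*b3*c1*d0*d2 + (1/2)*a1*b2*c3*d2 + (-1/2)*a1*b2*c2*d3 + (1/2)*a1*b2*b3*c3*d0*d1 + (-1/2)*a1*b2*b3*c1*d0*d3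 + (-1/2)*a1*b1*b3*c3*d0*d2 + (1/2)*a1*b1*b3*c2*d0*d3 + (-1/2)*a1*a3*b3*c0*c2*d1 + (1/2)*a1*a3*b3*c0*c1*d2 + (1/2)*a1*a3*b1*c0*c3*d2 + (-1/2)*a1*a3*b1*c0*c2*d3 + (1/2)*a1*a2*b3*c0*c3*d1 + (-1/2)*a1*a2*b3*c0*c1*d3 + (-1/2)*a1*a1*b3*c0*c3*d2 + (1/2)*a1*a1*b3*c0*c2*d3) * h00 + ((1/2)*b3*b3*d0*d2 + (-1/2)*b2*b3*d0*d3 + 1*b0*d2 + (-1/2)*b0*b3*b3*d0*d0*d2 + (1/2)*b0*b2*b3*d0*d0*d3 + (1/2)*a3*b3*c2*d0 + (1/2)*a3*b3*c0*d2 + (-1/2)*a3*b2*c0*d3 - 1*a3*b0*b3*c0*d0*d2 + (1/2)*a3*b0*b2*c0*d0*d3 + (1/2)*a3*a3*c0*c2 + (-1/2)*a3*a3*b0*c0*c0*d2 + (-1/2)*a2*b3*c3*d0 + (1/2)*a2*b0*b3*c0*d0*d3 + (-1/2)*a2*a3*c0*c3 + (1/2)*a2*a3*b0*c0*c0*d3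 + 1*a0*c2 + (-1/2)*a0*b3*b3*c2*d0*d0 + (1/2)*a0*b2*b3*c3*d0*d0 - 1*a0*a3*b3*c0*c2*d0 + (1/2)*a0*a3*b2*c0*c3*d0 + (-1/2)*a0*a3*a3*c0*c0*c2 + (1/2)*a0*a2*b3*c0*c3*d0 + (1/2)*a0*a2*a3*c0*c0*c3) * h11 + ((-1/2)*b3*d1 + (1/2)*b1*d3 + (-1/2)*b0*b3*d0*d1 + (-1/2)*b0*b1*d0*d3 + (-1/2)*a3*c1 + (-1/2)*a3*b0*c0*d1 + (1/2)*a1*c3 + (-1/2)*a1*b0*c0*d3 + (-1/2)*a0*b3*c1*d0 + (-1/2)*a0*b1*c3*d0 + (-1/2)*a0*a3*c0*c1 + (-1/2)*a0*a1*c0*c3) * h22 + (-1*b2*d0 + (-1/2)*b1*b2*d0*d1 + (1/2)*b1*b1*d0*d2 + (1/2)*b0*b1*b2*d0*d0*d1 + (-1/2)*b0*b1*b1*d0*d0*d2 - 1*a2*c0 + (-1/2)*a2*b1*c1*d0 + (1/2)*a2*b0*b1*c0*d0*d1 + (-1/2)*a1*b2*c0*d1 + (1/2)*a1*b1*c2*d0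 + (1/2)*a1*b1*c0*d2 + (1/2)*a1*b0*b2*c0*d0*d1 - 1*a1*b0*b1*c0*d0*d2 + (-1/2)*a1*a2*c0*c1 + (1/2)*a1*a2*b0*c0*c0*d1 + (1/2)*a1*a1*c0*c2 + (-1/2)*a1*a1*b0*c0*c0*d2 + (1/2)*a0*b1*b2*c1*d0*d0 + (-1/2)*a0*b1*b1*c2*d0*d0 + (1/2)*a0*a2*b1*c0*c1*d0 + (1/2)*a0*a1*b2*c0*c1*d0 - 1*a0*a1*b1*c0*c2*d0 + (1/2)*a0*a1*a2*c0*c0*c1 + (-1/2)*a0*a1*a1*c0*c0*c2) * h33 + ((1/2)*b3*d0 + (1/2)*b2*b3*d0*d2 - 1*b1*d2 + (-1/2)*b1*b2*d0*d0 + (-1/2)*b1*b2*b3*d0*d0*d3 + (1/2)*a3*c0 + (1/2)*a3*b2*c2*d0 + (-1/2)*a3*b1*b3*c2*d0*d0 + (1/2)*a3*b1*b3*c0*d0*d2 + (-1/2)*a3*b1*b2*c0*d0*d3 + (-1/2)*a3*a3*b1*c0*c2*d0 + (1/2)*a3*a3*b1*c0*c0*d2 + (1/2)*a2*b3*c0*d2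 + (-1/2)*a2*b1*c0*d0 + (-1/2)*a2*b1*b3*c0*d0*d3 + (1/2)*a2*a3*c0*c2 + (-1/2)*a2*a3*b1*c0*c0*d3 - 1*a1*c2 + (1/2)*a1*b3*b3*c2*d0*d0 + (-1/2)*a1*b3*b3*c0*d0*d2 + (-1/2)*a1*b2*c0*d0 + (-1/2)*a1*b2*b3*c3*d0*d0 + (1/2)*a1*a3*b3*c0*c2*d0 + (-1/2)*a1*a3*b3*c0*c0*d2 + (-1/2)*a1*a3*b2*c0*c3*d0 + (-1/2)*a1*a2*c0*c0 + (-1/2)*a1*a2*b3*c0*c3*d0 + (-1/2)*a1*a2*a3*c0*c0*c3) * h01 + (1 + (-1/2)*b3*b3*d0*d0 + (1/2)*b1*b3*b3*d0*d0*d1 + (1/2)*b1*b1*d0*d0 + (1/2)*b1*b1*b3*d0*d0*d3 - 1*a3*b3*c0*d0 + (-1/2)*a3*b2*c1*d0 + (1/2)*a3*b2*c0*d1 + (1/2)*a3*b1*b3*c1*d0*d0 + (1/2)*a3*b1*b3*c0*d0*d1 + (1/2)*a3*b1*b1*c0*d0*d3 + (-1/2)*a3*a3*c0*c0 + (1/2)*a3*a3*b1*c0*c1*d0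 + (1/2)*a2*b3*c1*d0 + (-1/2)*a2*b3*c0*d1 + (1/2)*a2*b1*c3*d0 + (-1/2)*a2*b1*c0*d3 + (1/2)*a1*b3*b3*c0*d0*d1 + (-1/2)*a1*b2*c3*d0 + (1/2)*a1*b2*c0*d3 + 1*a1*b1*c0*d0 + (1/2)*a1*b1*b3*c3*d0*d0 + (1/2)*a1*b1*b3*c0*d0*d3 + (1/2)*a1*a3*b3*c0*c1*d0 + (1/2)*a1*a3*b3*c0*c0*d1 + (1/2)*a1*a3*b1*c0*c3*d0 + (1/2)*a1*a3*b1*c0*c0*d3 + (1/2)*a1*a3*a3*c0*c0*c1 + (1/2)*a1*a1*c0*c0 + (1/2)*a1*a1*b3*c0*c3*d0 + (1/2)*a1*a1*a3*c0*c0*c3) * h02 + ((1/2)*b2*b3*d0*d0 + (-1/2)*b1*d0 + (1/2)*b1*b2*d0*d2 + (-1/2)*b1*b2*b3*d0*d0*d1 + (1/2)*a3*b2*c0*d0 + (-1/2)*a3*b1*b2*c1*d0*d0 + (1/2)*a3*b1*b1*c2*d0*d0 + (-1/2)*a3*b1*b1*c0*d0*d2 + (1/2)*a2*b3*c0*d0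 + (1/2)*a2*b1*c0*d2 + (-1/2)*a2*b1*b3*c0*d0*d1 + (1/2)*a2*a3*c0*c0 + (-1/2)*a2*a3*b1*c0*c1*d0 + (-1/2)*a1*c0 + (1/2)*a1*b2*c2*d0 + (-1/2)*a1*b2*b3*c0*d0*d1 + (-1/2)*a1*b1*b3*c2*d0*d0 + (1/2)*a1*b1*b3*c0*d0*d2 + (-1/2)*a1*a3*b2*c0*c1*d0 + (1/2)*a1*a3*b1*c0*c2*d0 + (-1/2)*a1*a3*b1*c0*c0*d2 + (1/2)*a1*a2*c0*c2 + (-1/2)*a1*a2*b3*c0*c0*d1 + (-1/2)*a1*a2*a3*c0*c0*c1 + (-1/2)*a1*a1*b3*c0*c2*d0 + (1/2)*a1*a1*b3*c0*c0*d2) * h03 + ((-1/2)*b3*b3*d0*d1 + (-1/2)*b2*d3 + (-1/2)*b2*b3*d0*d0 + (1/2)*b1*d0 + (-1/2)*a3*b3*c1*d0 + (-1/2)*a3*b3*c0*d1 + (-1/2)*a3*b2*c0*d0 + (-1/2)*a3*a3*c0*c1 + (-1/2)*a2*c3 + (-1/2)*a2*b3*c0*d0 + (-1/2)*a2*a3*c0*c0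 + (1/2)*a1*c0) * h12 + ((1/2) + (1/2)*b2*b3*d0*d1 + (1/2)*b2*b2*d0*d0 + (-1/2)*b1*b3*d0*d2 + (1/2)*a3*b2*c0*d1 + (-1/2)*a3*b1*c2*d0 + (1/2)*a2*b3*c1*d0 + 1*a2*b2*c0*d0 + (1/2)*a2*a3*c0*c1 + (1/2)*a2*a2*c0*c0 + (-1/2)*a1*b3*c0*d2 + (-1/2)*a1*a3*c0*c2) * h13 + ((1/2)*b3*d0 + (1/2)*b2*d1 + (1/2)*b1*b3*d0*d1 + (-1/2)*b1*b2*d0*d0 + (1/2)*a3*c0 + (1/2)*a3*b1*c1*d0 + (1/2)*a2*c1 + (-1/2)*a2*b1*c0*d0 + (1/2)*a1*b3*c0*d1 + (-1/2)*a1*b2*c0*d0 + (1/2)*a1*a3*c0*c1 + (-1/2)*a1*a2*c0*c0) * h23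
  have hT33 : ((a0*b1 - a1*b0) - (a2*b3 - a3*b2)) * ((c0*d1 - c1*d0) + (c2*d3 - c3*d2)) = 0 := by
    linear_combination (1*b1*d1 + 1*a3*b2*c3*d2 - 1*a3*b2*c2*d3 + (1/2)*a3*b2*b3*c2*d1*d1 + (-1/2)*a3*b2*b3*c1*d1*d2 + (1/2)*a3*b2*b2*c3*d1*d1 + (-1/2)*a3*b2*b2*c1*d1*d3 + (-1/2)*a3*b1*b3*c2*d1*d2 + (1/2)*a3*b1*b3*c1*d2*d2 + (-1/2)*a3*b1*b2*c3*d1*d2 + (1/2)*a3*b1*b2*c2*d1*d3 + (1/2)*a3*a3*b2*c1*c2*d1 + (-1/2)*a3*a3*b2*c1*c1*d2 + (-1/2)*a3*a3*b1*c2*c2*d1 + (1/2)*a3*a3*b1*c1*c2*d2 - 1*a2*b3*c3*d2 + 1*a2*b3*c2*d3 + (-1/2)*a2*b3*b3*c2*d1*d1 + (1/2)*a2*b3*b3*c1*d1*d2 + (-1/2)*a2*b2*b3*c3*d1*d1 + (1/2)*a2*b2*b3*c1*d1*d3 + 1*a2*b1*c2*d1 - 1*a2*b1*c1*d2 + (-1/2)*a2*b1*b3*c2*d1*d3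 + (1/2)*a2*b1*b3*c1*d2*d3 + (-1/2)*a2*a3*b3*c1*c2*d1 + (1/2)*a2*a3*b3*c1*c1*d2 + (1/2)*a2*a3*b2*c1*c3*d1 + (-1/2)*a2*a3*b2*c1*c1*d3 + (-1/2)*a2*a3*b1*c2*c3*d1 + (1/2)*a2*a3*b1*c1*c2*d3 + (-1/2)*a2*a2*b3*c1*c3*d1 + (1/2)*a2*a2*b3*c1*c1*d3 + 1*a1*c1 + (1/2)*a1*b3*b3*c2*d1*d2 + (-1/2)*a1*b3*b3*c1*d2*d2 - 1*a1*b2*c2*d1 + 1*a1*b2*c1*d2 + (1/2)*a1*b2*b3*c3*d1*d2 + (-1/2)*a1*b2*b3*c1*d2*d3 + (1/2)*a1*a3*b3*c2*c2*d1 + (-1/2)*a1*a3*b3*c1*c2*d2 + (1/2)*a1*a3*b2*c2*c3*d1 + (-1/2)*a1*a3*b2*c1*c3*d2 + (1/2)*a1*a2*b3*c1*c3*d2 + (-1/2)*a1*a2*b3*c1*c2*d3) * h00 + (1 + (-1/2)*b3*b3*d2*d2 + 1*b2*d2 + (-1/2)*b2*b3*d2*d3 + (1/2)*b0*b3*b3*d0*d2*d2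 - 1*b0*b2*d0*d2 + (1/2)*b0*b2*b3*d0*d2*d3 - 1*a3*b3*c2*d2 + (-1/2)*a3*b2*c2*d3 + 1*a3*b2*b3*c2*d0*d0 - 1*a3*b2*b3*c0*d0*d2 + (1/2)*a3*b0*b3*c2*d0*d2 + (1/2)*a3*b0*b3*c0*d2*d2 + (1/2)*a3*b0*b2*c2*d0*d3 + (-1/2)*a3*a3*c2*c2 + 1*a3*a3*b2*c0*c2*d0 - 1*a3*a3*b2*c0*c0*d2 + (1/2)*a3*a3*b0*c0*c2*d2 + 1*a2*c2 + (-1/2)*a2*b3*c3*d2 - 1*a2*b3*b3*c2*d0*d0 + 1*a2*b3*b3*c0*d0*d2 - 1*a2*b0*c0*d2 + (1/2)*a2*b0*b3*c0*d2*d3 + (-1/2)*a2*a3*c2*c3 - 1*a2*a3*b3*c0*c2*d0 + 1*a2*a3*b3*c0*c0*d2 + (1/2)*a2*a3*b0*c0*c2*d3 + (1/2)*a0*b3*b3*c2*d0*d2 - 1*a0*b2*c2*d0 + (1/2)*a0*b2*b3*c3*d0*d2 + (1/2)*a0*a3*b3*c2*c2*d0 + (1/2)*a0*a3*b3*c0*c2*d2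 + (1/2)*a0*a3*b2*c2*c3*d0 + (1/2)*a0*a3*a3*c0*c2*c2 - 1*a0*a2*c0*c2 + (1/2)*a0*a2*b3*c0*c3*d2 + (1/2)*a0*a2*a3*c0*c2*c3) * h11 + (1 + (-1/2)*b3*b3*d1*d1 - 1*b3*b3*d0*d0 + (-1/2)*b1*b3*d1*d3 + 1*b1*b3*b3*d0*d0*d1 - 1*b0*b3*d0*d3 + (1/2)*b0*b3*b3*d0*d1*d1 - 1*b0*b1*d0*d1 + (1/2)*b0*b1*b3*d0*d1*d3 - 1*a3*b3*c1*d1 - 2*a3*b3*c0*d0 + (-1/2)*a3*b1*c1*d3 + 1*a3*b1*b3*c1*d0*d0 + 1*a3*b1*b3*c0*d0*d1 - 1*a3*b0*c0*d3 + (1/2)*a3*b0*b3*c1*d0*d1 + (1/2)*a3*b0*b3*c0*d1*d1 + (1/2)*a3*b0*b1*c1*d0*d3 + (-1/2)*a3*a3*c1*c1 - 1*a3*a3*c0*c0 + 1*a3*a3*b1*c0*c1*d0 + (1/2)*a3*a3*b0*c0*c1*d1 + (-1/2)*a1*b3*c3*d1 + 1*a1*b3*b3*c0*d0*d1 - 1*a1*b0*c0*d1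 + (1/2)*a1*b0*b3*c0*d1*d3 + (-1/2)*a1*a3*c1*c3 + 1*a1*a3*b3*c0*c1*d0 + 1*a1*a3*b3*c0*c0*d1 + (1/2)*a1*a3*b0*c0*c1*d3 + 1*a1*a3*a3*c0*c0*c1 - 1*a0*b3*c3*d0 + (1/2)*a0*b3*b3*c1*d0*d1 - 1*a0*b1*c1*d0 + (1/2)*a0*b1*b3*c3*d0*d1 - 1*a0*a3*c0*c3 + (1/2)*a0*a3*b3*c1*c1*d0 + (1/2)*a0*a3*b3*c0*c1*d1 + (1/2)*a0*a3*b1*c1*c3*d0 + (1/2)*a0*a3*a3*c0*c1*c1 - 1*a0*a1*c0*c1 + (1/2)*a0*a1*b3*c0*c3*d1 + (1/2)*a0*a1*a3*c0*c1*c3) * h22 + ((1/2)*b2*b2*d1*d1 + (-1/2)*b1*b2*d1*d2 - 1*b0*b2*d0*d2 + (-1/2)*b0*b2*b2*d0*d1*d1 + (1/2)*b0*b1*b2*d0*d1*d2 + 1*a2*b2*c1*d1 + (-1/2)*a2*b1*c1*d2 - 1*a2*b0*c0*d2 + (-1/2)*a2*b0*b2*c1*d0*d1 + (-1/2)*a2*b0*b2*c0*d1*d1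 + (1/2)*a2*b0*b1*c1*d0*d2 + (1/2)*a2*a2*c1*c1 + (-1/2)*a2*a2*b0*c0*c1*d1 + (-1/2)*a1*b2*c2*d1 + (1/2)*a1*b0*b2*c0*d1*d2 + (-1/2)*a1*a2*c1*c2 + (1/2)*a1*a2*b0*c0*c1*d2 - 1*a0*b2*c2*d0 + (-1/2)*a0*b2*b2*c1*d0*d1 + (1/2)*a0*b1*b2*c2*d0*d1 - 1*a0*a2*c0*c2 + (-1/2)*a0*a2*b2*c1*c1*d0 + (-1/2)*a0*a2*b2*c0*c1*d1 + (1/2)*a0*a2*b1*c1*c2*d0 + (-1/2)*a0*a2*a2*c0*c1*c1 + (1/2)*a0*a1*b2*c0*c2*d1 + (1/2)*a0*a1*a2*c0*c1*c2) * h33 + ((-1/2)*b3*b3*d0*d1 + (-1/2)*b2*b3*b3*d0*d1*d2 + (1/2)*b2*b2*d0*d1 + (1/2)*b2*b2*b3*d0*d1*d3 + 1*b1*b2*d0*d2 + (-1/2)*a3*b3*c1*d0 + (-1/2)*a3*b3*c0*d1 + (-1/2)*a3*b2*b3*c2*d0*d1 + (-1/2)*a3*b2*b3*c1*d0*d2 +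 (1/2)*a3*b2*b2*c0*d1*d3 + (1/2)*a3*b1*b3*c2*d0*d2 + (-1/2)*a3*b1*b3*c0*d2*d2 + (-1/2)*a3*a3*c0*c1 + (-1/2)*a3*a3*b2*c1*c2*d0 + (1/2)*a3*a3*b1*c2*c2*d0 + (-1/2)*a3*a3*b1*c0*c2*d2 + (-1/2)*a2*b3*b3*c0*d1*d2 + (1/2)*a2*b2*c1*d0 + (1/2)*a2*b2*c0*d1 + (1/2)*a2*b2*b3*c3*d0*d1 + (1/2)*a2*b2*b3*c1*d0*d3 + 1*a2*b1*c0*d2 + (1/2)*a2*b1*b3*c3*d0*d2 + (-1/2)*a2*b1*b3*c0*d2*d3 + (-1/2)*a2*a3*b3*c0*c2*d1 + (-1/2)*a2*a3*b3*c0*c1*d2 + (1/2)*a2*a3*b2*c0*c3*d1 + (1/2)*a2*a3*b2*c0*c1*d3 + (1/2)*a2*a3*b1*c2*c3*d0 + (-1/2)*a2*a3*b1*c0*c2*d3 + (-1/2)*a2*a3*a3*c0*c1*c2 + (1/2)*a2*a2*c0*c1 + (1/2)*a2*a2*b3*c1*c3*d0 + (1/2)*a2*a2*a3*c0*c1*c3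 + (-1/2)*a1*b3*b3*c2*d0*d2 + (1/2)*a1*b3*b3*c0*d2*d2 + 1*a1*b2*c2*d0 + (-1/2)*a1*b2*b3*c3*d0*d2 + (1/2)*a1*b2*b3*c0*d2*d3 + (-1/2)*a1*a3*b3*c2*c2*d0 + (1/2)*a1*a3*b3*c0*c2*d2 + (-1/2)*a1*a3*b2*c2*c3*d0 + (1/2)*a1*a3*b2*c0*c2*d3 + 1*a1*a2*c0*c2) * h01 + ((1/2)*b3*b3*d0*d2 + 1*b2*b3*d0*d3 + 1*b1*d3 + (-1/2)*b1*b3*b3*d0*d1*d2 + (1/2)*b1*b2*d0*d1 + (-1/2)*b1*b2*b3*d0*d1*d3 + (1/2)*a3*b3*c2*d0 + (1/2)*a3*b3*c0*d2 + 1*a3*b2*c0*d3 + (1/2)*a3*b2*b3*c1*d0*d1 + (-1/2)*a3*b2*b3*c0*d1*d1 + (-1/2)*a3*b1*b3*c2*d0*d1 + (-1/2)*a3*b1*b3*c1*d0*d2 + (-1/2)*a3*b1*b2*c0*d1*d3 + (1/2)*a3*a3*c0*c2 + (1/2)*a3*a3*b2*c1*c1*d0 + (-1/2)*a3*a3*b2*c0*c1*d1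 + (-1/2)*a3*a3*b1*c1*c2*d0 + 1*a2*b3*c3*d0 + (-1/2)*a2*b3*b3*c1*d0*d1 + (1/2)*a2*b3*b3*c0*d1*d1 + (1/2)*a2*b1*c1*d0 + (-1/2)*a2*b1*b3*c3*d0*d1 + (-1/2)*a2*b1*b3*c1*d0*d3 + (1/2)*a2*b1*b3*c0*d1*d3 + 1*a2*a3*c0*c3 + (-1/2)*a2*a3*b3*c1*c1*d0 + (1/2)*a2*a3*b3*c0*c1*d1 + (-1/2)*a2*a3*b1*c1*c3*d0 + 1*a1*c3 + (-1/2)*a1*b3*b3*c0*d1*d2 + (1/2)*a1*b2*c0*d1 + (-1/2)*a1*b2*b3*c0*d1*d3 + (-1/2)*a1*a3*b3*c0*c2*d1 + (-1/2)*a1*a3*b3*c0*c1*d2 + (1/2)*a1*a3*b2*c1*c3*d0 + (-1/2)*a1*a3*b2*c0*c3*d1 + (-1/2)*a1*a3*b2*c0*c1*d3 + (-1/2)*a1*a3*a3*c0*c1*c2 + (1/2)*a1*a2*c0*c1 + (-1/2)*a1*a2*b3*c1*c3*d0 + (-1/2)*a1*a2*a3*c0*c1*c3) * h02 + (1*b3*d0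 + (3/2)*b2*b3*d0*d2 - 1*b1*d2 + (-1/2)*b1*b3*d0*d1 - 1*b1*b2*b3*d0*d1*d2 + 1*a3*c0 + (3/2)*a3*b2*c2*d0 + (1/2)*a3*b2*b2*c1*d0*d1 + (-1/2)*a3*b2*b2*c0*d1*d1 + (-1/2)*a3*b1*c1*d0 - 1*a3*b1*b2*c2*d0*d1 + (-1/2)*a3*b1*b2*c1*d0*d2 + (1/2)*a3*b1*b2*c0*d1*d2 + (3/2)*a2*b3*c0*d2 + (-1/2)*a2*b2*b3*c1*d0*d1 + (1/2)*a2*b2*b3*c0*d1*d1 + (-1/2)*a2*b1*b3*c1*d0*d2 + (-1/2)*a2*b1*b3*c0*d1*d2 + (3/2)*a2*a3*c0*c2 + (1/2)*a2*a3*b2*c1*c1*d0 + (-1/2)*a2*a3*b2*c0*c1*d1 - 1*a2*a3*b1*c1*c2*d0 + (-1/2)*a2*a2*b3*c1*c1*d0 + (1/2)*a2*a2*b3*c0*c1*d1 - 1*a1*c2 + (-1/2)*a1*b3*c0*d1 - 1*a1*b2*b3*c0*d1*d2 + (-1/2)*a1*a3*c0*c1 + (-1/2)*a1*a3*b2*c1*c2*d0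 + (-1/2)*a1*a3*b2*c0*c2*d1 + (1/2)*a1*a2*b3*c1*c2*d0 + (-1/2)*a1*a2*b3*c0*c2*d1 - 1*a1*a2*b3*c0*c1*d2 - 1*a1*a2*a3*c0*c1*c2) * h03 + (1*b3*d0 + (1/2)*b3*b3*d1*d2 + (-1/2)*b2*d1 + (1/2)*b2*b3*d1*d3 + (1/2)*b1*b3*b3*d0*d0*d2 - 1*b1*b2*d0*d0 + 1*a3*c0 + (1/2)*a3*b3*c2*d1 + (1/2)*a3*b3*c1*d2 + (1/2)*a3*b2*c1*d3 + (-1/2)*a3*b2*b3*c1*d0*d0 + (1/2)*a3*b2*b3*c0*d0*d1 + (1/2)*a3*b1*b3*c2*d0*d0 + (1/2)*a3*b1*b3*c0*d0*d2 + (1/2)*a3*a3*c1*c2 + (-1/2)*a3*a3*b2*c0*c1*d0 + (1/2)*a3*a3*b2*c0*c0*d1 + (1/2)*a3*a3*b1*c0*c2*d0 + (-1/2)*a2*c1 + (1/2)*a2*b3*c3*d1 + (1/2)*a2*b3*b3*c1*d0*d0 + (-1/2)*a2*b3*b3*c0*d0*d1 - 1*a2*b1*c0*d0 + (1/2)*a2*a3*c1*c3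 + (1/2)*a2*a3*b3*c0*c1*d0 + (-1/2)*a2*a3*b3*c0*c0*d1 + (1/2)*a1*b3*b3*c0*d0*d2 - 1*a1*b2*c0*d0 + (1/2)*a1*a3*b3*c0*c2*d0 + (1/2)*a1*a3*b3*c0*c0*d2 + (1/2)*a1*a3*a3*c0*c0*c2 - 1*a1*a2*c0*c0) * h12 + ((1/2)*b3*d1 - 1*b2*d0 + 1*b2*b3*d1*d2 + (1/2)*b1*b2*b3*d0*d0*d2 + (1/2)*a3*c1 + 1*a3*b2*c2*d1 + (-1/2)*a3*b2*b2*c1*d0*d0 + (1/2)*a3*b2*b2*c0*d0*d1 + (1/2)*a3*b1*b2*c2*d0*d0 - 1*a2*c0 + 1*a2*b3*c1*d2 + (1/2)*a2*b2*b3*c1*d0*d0 + (-1/2)*a2*b2*b3*c0*d0*d1 + (1/2)*a2*b1*b3*c0*d0*d2 + 1*a2*a3*c1*c2 + (-1/2)*a2*a3*b2*c0*c1*d0 + (1/2)*a2*a3*b2*c0*c0*d1 + (1/2)*a2*a3*b1*c0*c2*d0 + (1/2)*a2*a2*b3*c0*c1*d0 + (-1/2)*a2*a2*b3*c0*c0*d1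 + (1/2)*a1*b2*b3*c0*d0*d2 + (1/2)*a1*a3*b2*c0*c2*d0 + (1/2)*a1*a2*b3*c0*c0*d2 + (1/2)*a1*a2*a3*c0*c0*c2) * h13 + ((-1/2)*b3*d2 - 1*b2*b3*d1*d1 - 1*b2*b3*d0*d0 + (-1/2)*b1*b1*b3*d0*d0*d2 + (-1/2)*a3*c2 - 1*a3*b2*c1*d1 - 1*a3*b2*c0*d0 + (1/2)*a3*b1*b2*c1*d0*d0 + (-1/2)*a3*b1*b2*c0*d0*d1 + (-1/2)*a3*b1*b1*c2*d0*d0 - 1*a2*b3*c1*d1 - 1*a2*b3*c0*d0 + (-1/2)*a2*b1*b3*c1*d0*d0 + (1/2)*a2*b1*b3*c0*d0*d1 - 1*a2*a3*c1*c1 - 1*a2*a3*c0*c0 - 1*a1*b1*b3*c0*d0*d2 + (1/2)*a1*a3*b2*c0*c1*d0 + (-1/2)*a1*a3*b2*c0*c0*d1 - 1*a1*a3*b1*c0*c2*d0 + (-1/2)*a1*a2*b3*c0*c1*d0 + (1/2)*a1*a2*b3*c0*c0*d1 + (-1/2)*a1*a1*b3*c0*c0*d2 + (-1/2)*a1*a1*a3*c0*c0*c2)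 * h23
  have hTF : ((a0*b2 - a2*b0) + (a1*b3 - a3*b1)) * ((c0*d2 - c2*d0) + (c1*d3 - c3*d1)) + ((a0*b3 - a3*b0) - (a1*b2 - a2*b1)) * ((c0*d3 - c3*d0) - (c1*d2 - c2*d1)) - ((a0*b1 - a1*b0) + (a2*b3 - a3*b2)) * ((c0*d1 - c1*d0) + (c2*d3 - c3*d2)) + ((a0*b1 - a1*b0)*(c2*d3 - c3*d2) - (a0*b2 - a2*b0)*(c1*d3 - c3*d1) + (a0*b3 - a3*b0)*(c1*d2 - c2*d1) + (a1*b2 - a2*b1)*(c0*d3 - c3*d0) - (a1*b3 - a3*b1)*(c0*d2 - c2*d0) + (a2*b3 - a3*b2)*(c0*d1 - c1*d0)) + 4 = 0 := by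
    linear_combination (1*b3*d3 + 1*b2*d2 - 1*b1*d1 + 1*a3*c3 + 1*a3*b2*c3*d2 - 1*a3*b2*c2*d3 + (1/2)*a3*b2*b3*c2*d1*d1 + (-1/2)*a3*b2*b3*c1*d1*d2 + (1/2)*a3*b2*b2*c3*d1*d1 + (-1/2)*a3*b2*b2*c1*d1*d3 - 1*a3*b1*c3*d1 + 1*a3*b1*c1*d3 + (-1/2)*a3*b1*b3*c2*d1*d2 + (1/2)*a3*b1*b3*c1*d2*d2 + (-1/2)*a3*b1*b2*c3*d1*d2 + (1/2)*a3*b1*b2*c2*d1*d3 + (1/2)*a3*a3*b2*c1*c2*d1 + (-1/2)*a3*a3*b2*c1*c1*d2 + (-1/2)*a3*a3*b1*c2*c2*d1 + (1/2)*a3*a3*b1*c1*c2*d2 + 1*a2*c2 - 1*a2*b3*c3*d2 + 1*a2*b3*c2*d3 + (-1/2)*a2*b3*b3*c2*d1*d1 + (1/2)*a2*b3*b3*c1*d1*d2 + (-1/2)*a2*b2*b3*c3*d1*d1 + (1/2)*a2*b2*b3*c1*d1*d3 + (-1/2)*a2*b1*b3*c2*d1*d3 + (1/2)*a2*b1*b3*c1*d2*d3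 + (-1/2)*a2*a3*b3*c1*c2*d1 + (1/2)*a2*a3*b3*c1*c1*d2 + (1/2)*a2*a3*b2*c1*c3*d1 + (-1/2)*a2*a3*b2*c1*c1*d3 + (-1/2)*a2*a3*b1*c2*c3*d1 + (1/2)*a2*a3*b1*c1*c2*d3 + (-1/2)*a2*a2*b3*c1*c3*d1 + (1/2)*a2*a2*b3*c1*c1*d3 - 1*a1*c1 + 1*a1*b3*c3*d1 - 1*a1*b3*c1*d3 + (1/2)*a1*b3*b3*c2*d1*d2 + (-1/2)*a1*b3*b3*c1*d2*d2 + (1/2)*a1*b2*b3*c3*d1*d2 + (-1/2)*a1*b2*b3*c1*d2*d3 + (1/2)*a1*a3*b3*c2*c2*d1 + (-1/2)*a1*a3*b3*c1*c2*d2 + (1/2)*a1*a3*b2*c2*c3*d1 + (-1/2)*a1*a3*b2*c1*c3*d2 + (1/2)*a1*a2*b3*c1*c3*d2 + (-1/2)*a1*a2*b3*c1*c2*d3) * h00 + (-1 + (-1/2)*b3*b3*d2*d2 + 1*b2*d2 + (-1/2)*b2*b3*d2*d3 + 1*b0*b3*d0*d3 + (1/2)*b0*b3*b3*d0*d2*d2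 + (1/2)*b0*b2*b3*d0*d2*d3 - 1*a3*b3*c2*d2 + (-1/2)*a3*b2*c2*d3 + 1*a3*b2*b3*c2*d0*d0 - 1*a3*b2*b3*c0*d0*d2 + 1*a3*b0*c0*d3 + (1/2)*a3*b0*b3*c2*d0*d2 + (1/2)*a3*b0*b3*c0*d2*d2 + (1/2)*a3*b0*b2*c2*d0*d3 + (-1/2)*a3*a3*c2*c2 + 1*a3*a3*b2*c0*c2*d0 - 1*a3*a3*b2*c0*c0*d2 + (1/2)*a3*a3*b0*c0*c2*d2 + 1*a2*c2 + (-1/2)*a2*b3*c3*d2 - 1*a2*b3*b3*c2*d0*d0 + 1*a2*b3*b3*c0*d0*d2 + (1/2)*a2*b0*b3*c0*d2*d3 + (-1/2)*a2*a3*c2*c3 - 1*a2*a3*b3*c0*c2*d0 + 1*a2*a3*b3*c0*c0*d2 + (1/2)*a2*a3*b0*c0*c2*d3 + 1*a0*b3*c3*d0 + (1/2)*a0*b3*b3*c2*d0*d2 + (1/2)*a0*b2*b3*c3*d0*d2 + 1*a0*a3*c0*c3 + (1/2)*a0*a3*b3*c2*c2*d0 + (1/2)*a0*a3*b3*c0*c2*d2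 + (1/2)*a0*a3*b2*c2*c3*d0 + (1/2)*a0*a3*a3*c0*c2*c2 + (1/2)*a0*a2*b3*c0*c3*d2 + (1/2)*a0*a2*a3*c0*c2*c3) * h11 + (2 + (-1/2)*b3*b3*d1*d1 - 1*b3*b3*d0*d0 + (-1/2)*b1*b3*d1*d3 + 1*b1*b3*b3*d0*d0*d1 - 1*b0*b3*d0*d3 + (1/2)*b0*b3*b3*d0*d1*d1 + (1/2)*b0*b1*b3*d0*d1*d3 - 1*a3*b3*c1*d1 - 2*a3*b3*c0*d0 + (-1/2)*a3*b1*c1*d3 + 1*a3*b1*b3*c1*d0*d0 + 1*a3*b1*b3*c0*d0*d1 - 1*a3*b0*c0*d3 + (1/2)*a3*b0*b3*c1*d0*d1 + (1/2)*a3*b0*b3*c0*d1*d1 + (1/2)*a3*b0*b1*c1*d0*d3 + (-1/2)*a3*a3*c1*c1 - 1*a3*a3*c0*c0 + 1*a3*a3*b1*c0*c1*d0 + (1/2)*a3*a3*b0*c0*c1*d1 + (-1/2)*a1*b3*c3*d1 + 1*a1*b3*b3*c0*d0*d1 + (1/2)*a1*b0*b3*c0*d1*d3 + (-1/2)*a1*a3*c1*c3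 + 1*a1*a3*b3*c0*c1*d0 + 1*a1*a3*b3*c0*c0*d1 + (1/2)*a1*a3*b0*c0*c1*d3 + 1*a1*a3*a3*c0*c0*c1 - 1*a0*b3*c3*d0 + (1/2)*a0*b3*b3*c1*d0*d1 + (1/2)*a0*b1*b3*c3*d0*d1 - 1*a0*a3*c0*c3 + (1/2)*a0*a3*b3*c1*c1*d0 + (1/2)*a0*a3*b3*c0*c1*d1 + (1/2)*a0*a3*b1*c1*c3*d0 + (1/2)*a0*a3*a3*c0*c1*c1 + (1/2)*a0*a1*b3*c0*c3*d1 + (1/2)*a0*a1*a3*c0*c1*c3) * h22 + (1 + (1/2)*b2*b2*d1*d1 + (-1/2)*b1*b2*d1*d2 - 1*b0*b2*d0*d2 + (-1/2)*b0*b2*b2*d0*d1*d1 + 1*b0*b1*d0*d1 + (1/2)*b0*b1*b2*d0*d1*d2 + 1*a2*b2*c1*d1 + (-1/2)*a2*b1*c1*d2 - 1*a2*b0*c0*d2 + (-1/2)*a2*b0*b2*c1*d0*d1 + (-1/2)*a2*b0*b2*c0*d1*d1 + (1/2)*a2*b0*b1*c1*d0*d2 + (1/2)*a2*a2*c1*c1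 + (-1/2)*a2*a2*b0*c0*c1*d1 + (-1/2)*a1*b2*c2*d1 + 1*a1*b0*c0*d1 + (1/2)*a1*b0*b2*c0*d1*d2 + (-1/2)*a1*a2*c1*c2 + (1/2)*a1*a2*b0*c0*c1*d2 - 1*a0*b2*c2*d0 + (-1/2)*a0*b2*b2*c1*d0*d1 + 1*a0*b1*c1*d0 + (1/2)*a0*b1*b2*c2*d0*d1 - 1*a0*a2*c0*c2 + (-1/2)*a0*a2*b2*c1*c1*d0 + (-1/2)*a0*a2*b2*c0*c1*d1 + (1/2)*a0*a2*b1*c1*c2*d0 + (-1/2)*a0*a2*a2*c0*c1*c1 + 1*a0*a1*c0*c1 + (1/2)*a0*a1*b2*c0*c2*d1 + (1/2)*a0*a1*a2*c0*c1*c2) * h33 + ((-1/2)*b3*b3*d0*d1 + (-1/2)*b2*b3*b3*d0*d1*d2 + (1/2)*b2*b2*d0*d1 + (1/2)*b2*b2*b3*d0*d1*d3 - 1*b1*b3*d0*d3 + (-1/2)*a3*b3*c1*d0 + (-1/2)*a3*b3*c0*d1 + (-1/2)*a3*b2*b3*c2*d0*d1 + (-1/2)*a3*b2*b3*c1*d0*d2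 + (1/2)*a3*b2*b2*c0*d1*d3 - 1*a3*b1*c0*d3 + (1/2)*a3*b1*b3*c2*d0*d2 + (-1/2)*a3*b1*b3*c0*d2*d2 + (-1/2)*a3*a3*c0*c1 + (-1/2)*a3*a3*b2*c1*c2*d0 + (1/2)*a3*a3*b1*c2*c2*d0 + (-1/2)*a3*a3*b1*c0*c2*d2 + (-1/2)*a2*b3*b3*c0*d1*d2 + (1/2)*a2*b2*c1*d0 + (1/2)*a2*b2*c0*d1 + (1/2)*a2*b2*b3*c3*d0*d1 + (1/2)*a2*b2*b3*c1*d0*d3 + (1/2)*a2*b1*b3*c3*d0*d2 + (-1/2)*a2*b1*b3*c0*d2*d3 + (-1/2)*a2*a3*b3*c0*c2*d1 + (-1/2)*a2*a3*b3*c0*c1*d2 + (1/2)*a2*a3*b2*c0*c3*d1 + (1/2)*a2*a3*b2*c0*c1*d3 + (1/2)*a2*a3*b1*c2*c3*d0 + (-1/2)*a2*a3*b1*c0*c2*d3 + (-1/2)*a2*a3*a3*c0*c1*c2 + (1/2)*a2*a2*c0*c1 + (1/2)*a2*a2*b3*c1*c3*d0 + (1/2)*a2*a2*a3*c0*c1*c3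 - 1*a1*b3*c3*d0 + (-1/2)*a1*b3*b3*c2*d0*d2 + (1/2)*a1*b3*b3*c0*d2*d2 + (-1/2)*a1*b2*b3*c3*d0*d2 + (1/2)*a1*b2*b3*c0*d2*d3 - 1*a1*a3*c0*c3 + (-1/2)*a1*a3*b3*c2*c2*d0 + (1/2)*a1*a3*b3*c0*c2*d2 + (-1/2)*a1*a3*b2*c2*c3*d0 + (1/2)*a1*a3*b2*c0*c2*d3) * h01 + ((1/2)*b3*b3*d0*d2 + 1*b2*b3*d0*d3 + (-1/2)*b1*b3*b3*d0*d1*d2 + (-1/2)*b1*b2*d0*d1 + (-1/2)*b1*b2*b3*d0*d1*d3 + (1/2)*a3*b3*c2*d0 + (1/2)*a3*b3*c0*d2 + 1*a3*b2*c0*d3 + (1/2)*a3*b2*b3*c1*d0*d1 + (-1/2)*a3*b2*b3*c0*d1*d1 + (-1/2)*a3*b1*b3*c2*d0*d1 + (-1/2)*a3*b1*b3*c1*d0*d2 + (-1/2)*a3*b1*b2*c0*d1*d3 + (1/2)*a3*a3*c0*c2 + (1/2)*a3*a3*b2*c1*c1*d0 + (-1/2)*a3*a3*b2*c0*c1*d1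 + (-1/2)*a3*a3*b1*c1*c2*d0 + 1*a2*b3*c3*d0 + (-1/2)*a2*b3*b3*c1*d0*d1 + (1/2)*a2*b3*b3*c0*d1*d1 + (-1/2)*a2*b1*c1*d0 + (-1/2)*a2*b1*b3*c3*d0*d1 + (-1/2)*a2*b1*b3*c1*d0*d3 + (1/2)*a2*b1*b3*c0*d1*d3 + 1*a2*a3*c0*c3 + (-1/2)*a2*a3*b3*c1*c1*d0 + (1/2)*a2*a3*b3*c0*c1*d1 + (-1/2)*a2*a3*b1*c1*c3*d0 + (-1/2)*a1*b3*b3*c0*d1*d2 + (-1/2)*a1*b2*c0*d1 + (-1/2)*a1*b2*b3*c0*d1*d3 + (-1/2)*a1*a3*b3*c0*c2*d1 + (-1/2)*a1*a3*b3*c0*c1*d2 + (1/2)*a1*a3*b2*c1*c3*d0 + (-1/2)*a1*a3*b2*c0*c3*d1 + (-1/2)*a1*a3*b2*c0*c1*d3 + (-1/2)*a1*a3*a3*c0*c1*c2 + (-1/2)*a1*a2*c0*c1 + (-1/2)*a1*a2*b3*c1*c3*d0 + (-1/2)*a1*a2*a3*c0*c1*c3) * h02 + (1*b3*d0 + (3/2)*b2*b3*d0*d2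 + (-3/2)*b1*b3*d0*d1 - 1*b1*b2*b3*d0*d1*d2 + 1*a3*c0 + (3/2)*a3*b2*c2*d0 + (1/2)*a3*b2*b2*c1*d0*d1 + (-1/2)*a3*b2*b2*c0*d1*d1 + (-3/2)*a3*b1*c1*d0 - 1*a3*b1*b2*c2*d0*d1 + (-1/2)*a3*b1*b2*c1*d0*d2 + (1/2)*a3*b1*b2*c0*d1*d2 + (3/2)*a2*b3*c0*d2 + (-1/2)*a2*b2*b3*c1*d0*d1 + (1/2)*a2*b2*b3*c0*d1*d1 + (-1/2)*a2*b1*b3*c1*d0*d2 + (-1/2)*a2*b1*b3*c0*d1*d2 + (3/2)*a2*a3*c0*c2 + (1/2)*a2*a3*b2*c1*c1*d0 + (-1/2)*a2*a3*b2*c0*c1*d1 - 1*a2*a3*b1*c1*c2*d0 + (-1/2)*a2*a2*b3*c1*c1*d0 + (1/2)*a2*a2*b3*c0*c1*d1 + (-3/2)*a1*b3*c0*d1 - 1*a1*b2*b3*c0*d1*d2 + (-3/2)*a1*a3*c0*c1 + (-1/2)*a1*a3*b2*c1*c2*d0 + (-1/2)*a1*a3*b2*c0*c2*d1 + (1/2)*a1*a2*b3*c1*c2*d0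 + (-1/2)*a1*a2*b3*c0*c2*d1 - 1*a1*a2*b3*c0*c1*d2 - 1*a1*a2*a3*c0*c1*c2) * h03 + ((1/2)*b3*b3*d1*d2 + (-1/2)*b2*d1 + (1/2)*b2*b3*d1*d3 + (1/2)*b1*b3*b3*d0*d0*d2 + (1/2)*a3*b3*c2*d1 + (1/2)*a3*b3*c1*d2 + (1/2)*a3*b2*c1*d3 + (-1/2)*a3*b2*b3*c1*d0*d0 + (1/2)*a3*b2*b3*c0*d0*d1 + (1/2)*a3*b1*b3*c2*d0*d0 + (1/2)*a3*b1*b3*c0*d0*d2 + (1/2)*a3*a3*c1*c2 + (-1/2)*a3*a3*b2*c0*c1*d0 + (1/2)*a3*a3*b2*c0*c0*d1 + (1/2)*a3*a3*b1*c0*c2*d0 + (-1/2)*a2*c1 + (1/2)*a2*b3*c3*d1 + (1/2)*a2*b3*b3*c1*d0*d0 + (-1/2)*a2*b3*b3*c0*d0*d1 + (1/2)*a2*a3*c1*c3 + (1/2)*a2*a3*b3*c0*c1*d0 + (-1/2)*a2*a3*b3*c0*c0*d1 + (1/2)*a1*b3*b3*c0*d0*d2 + (1/2)*a1*a3*b3*c0*c2*d0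 + (1/2)*a1*a3*b3*c0*c0*d2 + (1/2)*a1*a3*a3*c0*c0*c2) * h12 + ((1/2)*b3*d1 + 1*b2*b3*d1*d2 + 1*b1*b3*d0*d0 + (1/2)*b1*b2*b3*d0*d0*d2 + (1/2)*a3*c1 + 1*a3*b2*c2*d1 + (-1/2)*a3*b2*b2*c1*d0*d0 + (1/2)*a3*b2*b2*c0*d0*d1 + 1*a3*b1*c0*d0 + (1/2)*a3*b1*b2*c2*d0*d0 + 1*a2*b3*c1*d2 + (1/2)*a2*b2*b3*c1*d0*d0 + (-1/2)*a2*b2*b3*c0*d0*d1 + (1/2)*a2*b1*b3*c0*d0*d2 + 1*a2*a3*c1*c2 + (-1/2)*a2*a3*b2*c0*c1*d0 + (1/2)*a2*a3*b2*c0*c0*d1 + (1/2)*a2*a3*b1*c0*c2*d0 + (1/2)*a2*a2*b3*c0*c1*d0 + (-1/2)*a2*a2*b3*c0*c0*d1 + 1*a1*b3*c0*d0 + (1/2)*a1*b2*b3*c0*d0*d2 + 1*a1*a3*c0*c0 + (1/2)*a1*a3*b2*c0*c2*d0 + (1/2)*a1*a2*b3*c0*c0*d2 + (1/2)*a1*a2*a3*c0*c0*c2)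 * h13 + ((-1/2)*b3*d2 - 1*b2*b3*d1*d1 - 1*b2*b3*d0*d0 + (-1/2)*b1*b1*b3*d0*d0*d2 + (-1/2)*a3*c2 - 1*a3*b2*c1*d1 - 1*a3*b2*c0*d0 + (1/2)*a3*b1*b2*c1*d0*d0 + (-1/2)*a3*b1*b2*c0*d0*d1 + (-1/2)*a3*b1*b1*c2*d0*d0 - 1*a2*b3*c1*d1 - 1*a2*b3*c0*d0 + (-1/2)*a2*b1*b3*c1*d0*d0 + (1/2)*a2*b1*b3*c0*d0*d1 - 1*a2*a3*c1*c1 - 1*a2*a3*c0*c0 - 1*a1*b1*b3*c0*d0*d2 + (1/2)*a1*a3*b2*c0*c1*d0 + (-1/2)*a1*a3*b2*c0*c0*d1 - 1*a1*a3*b1*c0*c2*d0 + (-1/2)*a1*a2*b3*c0*c1*d0 + (1/2)*a1*a2*b3*c0*c0*d1 + (-1/2)*a1*a1*b3*c0*c0*d2 + (-1/2)*a1*a1*a3*c0*c0*c2) * h23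
  have hvc : ((c0*d2 - c2*d0) + (c1*d3 - c3*d1)) ≠ 0 ∨ ((c0*d3 - c3*d0) - (c1*d2 - c2*d1)) ≠ 0 ∨ ((c0*d1 - c1*d0) + (c2*d3 - c3*d2)) ≠ 0 := by
    by_contra hcon
    push_neg at hcon
    obtain ⟨e1, e2, e3⟩ := hcon
    rw [e1, e2, e3] at hTF
    nlinarith [hTF, hD]
  have hu1 : ((a0*b2 - a2*b0) - (a1*b3 - a3*b1)) = 0 := by
    rcases hvc with h|h|h
    exacts [(mul_eq_zero.mp hT11).resolve_right h, (mul_eq_zero.mp hT12).resolve_right h,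
      (mul_eq_zero.mp hT13).resolve_right h]
  have hu2 : ((a0*b3 - a3*b0) + (a1*b2 - a2*b1)) = 0 := by
    rcases hvc with h|h|h
    exacts [(mul_eq_zero.mp hT21).resolve_right h, (mul_eq_zero.mp hT22).resolve_right h,
      (mul_eq_zero.mp hT23).resolve_right h]
  have hu3 : ((a0*b1 - a1*b0) - (a2*b3 - a3*b2)) = 0 := by
    rcases hvc with h|h|h
    exacts [(mul_eq_zero.mp hT31).resolve_right h, (mul_eq_zero.mp hT32).resolve_right h,
      (mul_eq_zero.mp hT33).resolve_right h]
  have hw01ne : a0*b1 - a1*b0 ≠ 0 := by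
    intro h0
    have h23 : a2*b3 - a3*b2 = 0 := by linear_combination h0 - hu3
    have hsq : (a0*b2 - a2*b0)^2 + (a0*b3 - a3*b0)^2 = 0 := by
      linear_combination (a0*b2 - a2*b0)*hu1 + (a0*b3 - a3*b0)*hu2 + (a2*b3 - a3*b2)*h0
    have h02 : a0*b2 - a2*b0 = 0 := by nlinarith [sq_nonneg (a0*b2 - a2*b0), sq_nonneg (a0*b3 - a3*b0)]
    have h03 : a0*b3 - a3*b0 = 0 := by nlinarith [sq_nonneg (a0*b2 - a2*b0), sq_nonneg (a0*b3 - a3*b0)]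
    have h13 : a1*b3 - a3*b1 = 0 := by linear_combination h02 - hu1
    have h12 : a1*b2 - a2*b1 = 0 := by linear_combination hu2 - h03
    have hD0 : ((a0*b1 - a1*b0)*(c2*d3 - c3*d2) - (a0*b2 - a2*b0)*(c1*d3 - c3*d1) + (a0*b3 - a3*b0)*(c1*d2 - c2*d1) + (a1*b2 - a2*b1)*(c0*d3 - c3*d0) - (a1*b3 - a3*b1)*(c0*d2 - c2*d0) + (a2*b3 - a3*b2)*(c0*d1 - c1*d0)) = 0 := by
      linear_combination (c2*d3 - c3*d2)*h0 - (c1*d3 - c3*d1)*h02 + (c1*d2 - c2*d1)*h03 + (c0*d3 - c3*d0)*h12 - (c0*d2 - c2*d0)*h13 + (c0*d1 - c1*d0)*h23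
    linarith [hD, hD0]
  have hinv : (a0*b1 - a1*b0) * (a0*b1 - a1*b0)⁻¹ = 1 := mul_inv_cancel₀ hw01ne
  refine ⟨-(a1*b2 - a2*b1)/(a0*b1 - a1*b0), (a0*b2 - a2*b0)/(a0*b1 - a1*b0), ?_, ?_, ?_, ?_, ?_⟩
  · have hkey : (a1*b2 - a2*b1)^2 + (a0*b2 - a2*b0)^2 = (a0*b1 - a1*b0)^2 := by
      linear_combination (a0*b2 - a2*b0)*hu1 + (a1*b2 - a2*b1)*hu2 - (a0*b1 - a1*b0)*hu3
    linear_combination ((a0*b1 - a1*b0)⁻¹)^2*hkey + ((a0*b1 - a1*b0)*(a0*b1 - a1*b0)⁻¹ + 1)*hinv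
  · linear_combination (-a2)*hinv
  · linear_combination (-b2)*hinv
  · linear_combination (-a3)*hinv + (a0*b1 - a1*b0)⁻¹*(a0*hu1 + a1*hu2)
  · linear_combination (-b3)*hinv + (a0*b1 - a1*b0)⁻¹*(b0*hu1 + b1*hu2)

theorem stmt16 {V : Type*} [AddCommGroup V] [Module ℝ V] [FiniteDimensional ℝ V]
    (hdim : Module.finrank ℝ V = 2)
    (J : (V × Module.Dual ℝ V) →ₗ[ℝ] (V × Module.Dual ℝ V))
    (hJ2 : J ∘ₗ J = -LinearMap.id)
    (hJskew : ∀ p q, neutralForm (J p) q = - neutralForm p (J q))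
    (Q : Fin 4 → V × Module.Dual ℝ V)
    (horth : ∀ i j, i ≠ j → neutralForm (Q i) (Q j) = 0)
    (hnorm : ∀ i : Fin 4, neutralForm (Q i) (Q i) = if (i : ℕ) < 2 then 1 else -1)
    (hQ1 : Q 1 = J (Q 0)) (hQ3 : Q 3 = J (Q 2))
    (eV : Module.Basis (Fin 2) ℝ V)
    (c : Module.Basis (Fin 4) ℝ (V × Module.Dual ℝ V)) (hc : ⇑c = Q)
    (hcanon : c.orientation =
      ((eV.prod eV.dualBasis).reindex finSumFinEquiv).orientation) :
    ∃ t : ℝ,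
      (Q 2).1 = Real.cos t • (Q 0).1 + Real.sin t • (Q 1).1 ∧
      (Q 3).1 = -Real.sin t • (Q 0).1 + Real.cos t • (Q 1).1 := by
  have hnf : ∀ p q : V × Module.Dual ℝ V, neutralForm p q = (p.2 q.1 + q.2 p.1)/2 :=
    fun _ _ => rfl
  have hrepr : ∀ i, (Q i).1 = (eV.repr (Q i).1 0) • eV 0 + (eV.repr (Q i).1 1) • eV 1 := by
    intro i
    have h := eV.sum_repr (Q i).1
    rw [Fin.sum_univ_two] at h
    exact h.symm
  have hM : ∀ i j, (Q i).2 (Q j).1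
      = (Q i).2 (eV 0) * eV.repr (Q j).1 0 + (Q i).2 (eV 1) * eV.repr (Q j).1 1 := by
    intro i j
    conv_lhs => rw [hrepr j]
    rw [map_add, map_smul, map_smul, smul_eq_mul, smul_eq_mul]
    ring
  have h00 : ((Q 0).2 (eV 0))*(eV.repr (Q 0).1 0) + ((Q 0).2 (eV 1))*(eV.repr (Q 0).1 1) = 1 := by
    have h := hnorm 0
    rw [hnf, hM 0 0, if_pos (by decide)] at h
    linarith
  have h11 : ((Q 1).2 (eV 0))*(eV.repr (Q 1).1 0) + ((Q 1).2 (eV 1))*(eV.repr (Q 1).1 1) = 1 := by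
    have h := hnorm 1
    rw [hnf, hM 1 1, if_pos (by decide)] at h
    linarith
  have h22 : ((Q 2).2 (eV 0))*(eV.repr (Q 2).1 0) + ((Q 2).2 (eV 1))*(eV.repr (Q 2).1 1) = -1 := by
    have h := hnorm 2
    rw [hnf, hM 2 2, if_neg (by decide)] at h
    linarith
  have h33 : ((Q 3).2 (eV 0))*(eV.repr (Q 3).1 0) + ((Q 3).2 (eV 1))*(eV.repr (Q 3).1 1) = -1 := by
    have h := hnorm 3
    rw [hnf, hM 3 3, if_neg (by decide)] at h
    linarith
  have h01 : ((Q 0).2 (eV 0))*(eV.repr (Q 1).1 0) + ((Q 0).2 (eV 1))*(eV.repr (Q 1).1 1) + (((Q 1).2 (eV 0))*(eV.repr (Q 0).1 0) + ((Q 1).2 (eV 1))*(eV.repr (Q 0).1 1)) = 0 := by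
    have h := horth 0 1 (by decide)
    rw [hnf, hM 0 1, hM 1 0] at h
    linarith
  have h02 : ((Q 0).2 (eV 0))*(eV.repr (Q 2).1 0) + ((Q 0).2 (eV 1))*(eV.repr (Q 2).1 1) + (((Q 2).2 (eV 0))*(eV.repr (Q 0).1 0) + ((Q 2).2 (eV 1))*(eV.repr (Q 0).1 1)) = 0 := by
    have h := horth 0 2 (by decide)
    rw [hnf, hM 0 2, hM 2 0] at h
    linarith
  have h03 : ((Q 0).2 (eV 0))*(eV.repr (Q 3).1 0) + ((Q 0).2 (eV 1))*(eV.repr (Q 3).1 1) + (((Q 3).2 (eV 0))*(eV.repr (Q 0).1 0) + ((Q 3).2 (eV 1))*(eV.repr (Q 0).1 1)) = 0 := by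
    have h := horth 0 3 (by decide)
    rw [hnf, hM 0 3, hM 3 0] at h
    linarith
  have h12 : ((Q 1).2 (eV 0))*(eV.repr (Q 2).1 0) + ((Q 1).2 (eV 1))*(eV.repr (Q 2).1 1) + (((Q 2).2 (eV 0))*(eV.repr (Q 1).1 0) + ((Q 2).2 (eV 1))*(eV.repr (Q 1).1 1)) = 0 := by
    have h := horth 1 2 (by decide)
    rw [hnf, hM 1 2, hM 2 1] at h
    linarith
  have h13 : ((Q 1).2 (eV 0))*(eV.repr (Q 3).1 0) + ((Q 1).2 (eV 1))*(eV.repr (Q 3).1 1) + (((Q 3).2 (eV 0))*(eV.repr (Q 1).1 0) + ((Q 3).2 (eV 1))*(eV.repr (Q 1).1 1)) = 0 := by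
    have h := horth 1 3 (by decide)
    rw [hnf, hM 1 3, hM 3 1] at h
    linarith
  have h23 : ((Q 2).2 (eV 0))*(eV.repr (Q 3).1 0) + ((Q 2).2 (eV 1))*(eV.repr (Q 3).1 1) + (((Q 3).2 (eV 0))*(eV.repr (Q 2).1 0) + ((Q 3).2 (eV 1))*(eV.repr (Q 2).1 1)) = 0 := by
    have h := horth 2 3 (by decide)
    rw [hnf, hM 2 3, hM 3 2] at h
    linarith
  have hs0 : (finSumFinEquiv.symm (0 : Fin 4) : Fin 2 ⊕ Fin 2) = Sum.inl 0 := by decide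
  have hs1 : (finSumFinEquiv.symm (1 : Fin 4) : Fin 2 ⊕ Fin 2) = Sum.inl 1 := by decide
  have hs2 : (finSumFinEquiv.symm (2 : Fin 4) : Fin 2 ⊕ Fin 2) = Sum.inr 0 := by decide
  have hs3 : (finSumFinEquiv.symm (3 : Fin 4) : Fin 2 ⊕ Fin 2) = Sum.inr 1 := by decide
  have hdetpos : 0 < ((eV.prod eV.dualBasis).reindex finSumFinEquiv).det ⇑c :=
    (Module.Basis.orientation_eq_iff_det_pos _ _).mp hcanon.symm
  have hmat : (((eV.prod eV.dualBasis).reindex finSumFinEquiv).toMatrix ⇑c) =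
      !![(eV.repr (Q 0).1 0),(eV.repr (Q 1).1 0),(eV.repr (Q 2).1 0),(eV.repr (Q 3).1 0); (eV.repr (Q 0).1 1),(eV.repr (Q 1).1 1),(eV.repr (Q 2).1 1),(eV.repr (Q 3).1 1);
         ((Q 0).2 (eV 0)),((Q 1).2 (eV 0)),((Q 2).2 (eV 0)),((Q 3).2 (eV 0)); ((Q 0).2 (eV 1)),((Q 1).2 (eV 1)),((Q 2).2 (eV 1)),((Q 3).2 (eV 1))] := by
    ext i j
    rw [Module.Basis.toMatrix_apply, hc]
    fin_cases i <;> fin_cases j <;>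
      simp [Module.Basis.repr_reindex_apply, hs0, hs1, hs2, hs3, Module.Basis.prod_repr_inl,
        Module.Basis.prod_repr_inr, Module.Basis.dualBasis_repr]
  have hdet : ((eV.prod eV.dualBasis).reindex finSumFinEquiv).det ⇑c = (((eV.repr (Q 0).1 0)*(eV.repr (Q 1).1 1) - (eV.repr (Q 1).1 0)*(eV.repr (Q 0).1 1))*(((Q 2).2 (eV 0))*((Q 3).2 (eV 1)) - ((Q 3).2 (eV 0))*((Q 2).2 (eV 1))) - ((eV.repr (Q 0).1 0)*(eV.repr (Q 2).1 1) - (eV.repr (Q 2).1 0)*(eV.repr (Q 0).1 1))*(((Q 1).2 (eV 0))*((Q 3).2 (eV 1)) - ((Q 3).2 (eV 0))*((Q 1).2 (eV 1))) + ((eV.repr (Q 0).1 0)*(eV.repr (Q 3).1 1) - (eV.repr (Q 3).1 0)*(eV.repr (Q 0).1 1))*(((Q 1).2 (eV 0))*((Q 2).2 (eV 1)) - ((Q 2).2 (eV 0))*((Q 1).2 (eV 1))) + ((eV.repr (Q 1).1 0)*(eV.repr (Q 2).1 1) - (eV.repr (Q 2).1 0)*(eV.repr (Q 1).1 1))*(((Q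 0).2 (eV 0))*((Q 3).2 (eV 1)) - ((Q 3).2 (eV 0))*((Q 0).2 (eV 1))) - ((eV.repr (Q 1).1 0)*(eV.repr (Q 3).1 1) - (eV.repr (Q 3).1 0)*(eV.repr (Q 1).1 1))*(((Q 0).2 (eV 0))*((Q 2).2 (eV 1)) - ((Q 2).2 (eV 0))*((Q 0).2 (eV 1))) + ((eV.repr (Q 2).1 0)*(eV.repr (Q 3).1 1) - (eV.repr (Q 3).1 0)*(eV.repr (Q 2).1 1))*(((Q 0).2 (eV 0))*((Q 1).2 (eV 1)) - ((Q 1).2 (eV 0))*((Q 0).2 (eV 1)))) := by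
    rw [Module.Basis.det_apply, hmat]
    rw [Matrix.det_succ_row_zero]
    simp [Fin.sum_univ_succ, Matrix.det_fin_three, show Fin.succAbove (1 : Fin 4) (2 : Fin 3) = 3 from by decide, show Fin.succAbove (2 : Fin 4) (2 : Fin 3) = 3 from by decide, show Fin.succAbove (3 : Fin 4) (2 : Fin 3) = 2 from by decide]
    ring
  rw [hdet] at hdetpos
  obtain ⟨x, y, hxy, ha2, hb2, ha3, hb3⟩ :=
    corelemma (eV.repr (Q 0).1 0) (eV.repr (Q 1).1 0) (eV.repr (Q 2).1 0) (eV.repr (Q 3).1 0) (eV.repr (Q 0).1 1) (eV.repr (Q 1).1 1) (eV.repr (Q 2).1 1) (eV.repr (Q 3).1 1) ((Q 0).2 (eV 0)) ((Q 1).2 (eV 0)) ((Q 2).2 (eV 0)) ((Q 3).2 (eV 0)) ((Q 0).2 (eV 1)) ((Q 1).2 (eV 1)) ((Q 2).2 (eV 1)) ((Q 3).2 (eV 1)) h00 h11 h22 h33 h01 h02 h03 h12 h13 h23 hdetpos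
  have hz : ‖(⟨x, y⟩ : ℂ)‖ = 1 := by
    rw [Complex.norm_def, Complex.normSq_mk, show x*x + y*y = (1:ℝ) from by linear_combination hxy]
    exact Real.sqrt_one
  have hz0 : (⟨x, y⟩ : ℂ) ≠ 0 := by
    intro h
    rw [h] at hz
    simp at hz
  have hcos : Real.cos (Complex.arg ⟨x, y⟩) = x := by
    rw [Complex.cos_arg hz0, hz, div_one]
  have hsin : Real.sin (Complex.arg ⟨x, y⟩) = y := by
    rw [Complex.sin_arg, hz, div_one]
  refine ⟨Complex.arg ⟨x, y⟩, ?_, ?_⟩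
  · rw [hcos, hsin, hrepr 0, hrepr 1, hrepr 2, ha2, hb2]
    module
  · rw [hcos, hsin, hrepr 0, hrepr 1, hrepr 3, ha3, hb3]
    module
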